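/- arXiv:2202.13265 — 10 statements merged into one kernel-verified Lean document; each statement's English description precedes it below -/
import Mathlib

section
/- Let M be a totally unimodular real matrix with columns indexed by a finite set E, and let λ be an element of ker(M) whose support is a circuit (i.e., the columns indexed by supp(λ) are minimally linearly dependent). Then λ = k·γ for some real number k and some vector γ ∈ ker(M) all of whose coordinates lie in {-1, 0, 1}. -/
open Matrix

lemma exists_invertible_submatrix {n : ℕ} {V E : Type*} [Fintype V]
    (M : Matrix V E ℝ) (g : Fin n → E)
    (h : LinearIndependent ℝ (fun i : Fin n => fun v : V => M v (g i))) :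
    ∃ f : Fin n → V, IsUnit (M.submatrix f g).det := by
  classical
  set r : V → (Fin n → ℝ) := fun v i => M v (g i) with hr
  have hspan : Submodule.span ℝ (Set.range r) = ⊤ := by
    set B : Matrix (Fin n) V ℝ := Matrix.of fun i v => M v (g i) with hB
    have hrank : B.rank = n := by
      have := LinearIndependent.rank_matrix (M := B) h
      simpa using this
    have h2 : B.rank = Module.finrank ℝ (Submodule.span ℝ (Set.range Bᵀ)) :=
      B.rank_eq_finrank_span_cols
    have hBt : Bᵀ = r := rfl
    apply Submodule.eq_top_of_finrank_eq
    rw [← hBt, ← h2, hrank]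
    simp [Module.finrank_pi]
  obtain ⟨b, hbsub, hbspan, hbind⟩ := exists_linearIndependent ℝ (Set.range r)
  rw [hspan] at hbspan
  have hbasis : Module.Basis b ℝ (Fin n → ℝ) :=
    Module.Basis.mk hbind (by rw [Subtype.range_coe, hbspan])
  have : Fintype b := FiniteDimensional.fintypeBasisIndex hbasis
  have hcard : Fintype.card b = n := by
    have := Module.finrank_eq_card_basis hbasis
    simp [Module.finrank_pi] at this
    rw [← Nat.card_coe_set_eq, Nat.card_eq_fintype_card] at this
    omega
  let eqv : Fin n ≃ b := (Fintype.equivFinOfCardEq hcard).symm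
  have hpre : ∀ j : Fin n, ∃ v : V, r v = (eqv j : Fin n → ℝ) := fun j => hbsub (eqv j).2
  choose f hf using hpre
  refine ⟨f, ?_⟩
  have hrows : LinearIndependent ℝ (fun j : Fin n => (M.submatrix f g) j) := by
    have heq : (fun j : Fin n => (M.submatrix f g) j)
        = fun j => ((eqv j : b) : Fin n → ℝ) := by
      funext j
      exact hf j
    rw [heq]
    exact hbind.comp (fun j => eqv j) eqv.injective
  exact (Matrix.isUnit_iff_isUnit_det _).mp
    (Matrix.linearIndependent_rows_iff_isUnit.mp hrows)

/-- A kernel vector of a totally unimodular matrix whose support is a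
circuit (minimally linearly dependent set of columns) is a scalar multiple of an
Eulerian vector (all coordinates in {-1,0,1}). -/
theorem stmt_0 {V E : Type*} [Fintype V] [Fintype E]
    (M : Matrix V E ℝ)
    (hTU : ∀ (k : ℕ) (f : Fin k → V) (g : Fin k → E),
      (M.submatrix f g).det = 1 ∨ (M.submatrix f g).det = 0 ∨ (M.submatrix f g).det = -1)
    (lam : E → ℝ) (hker : M.mulVec lam = 0)
    (hdep : ¬ LinearIndependent ℝ (fun e : {e : E // lam e ≠ 0} => fun v => M v e.1))
    (hmin : ∀ s : Set E, s ⊂ {e : E | lam e ≠ 0} →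
      LinearIndependent ℝ (fun e : s => fun v => M v e.1)) :
    ∃ (k : ℝ) (γ : E → ℝ), M.mulVec γ = 0 ∧
      (∀ e, γ e = -1 ∨ γ e = 0 ∨ γ e = 1) ∧ lam = k • γ := by
  classical
  obtain ⟨e₀, he₀⟩ : ∃ e, lam e ≠ 0 := by
    by_contra hno
    push_neg at hno
    apply hdep
    have : IsEmpty {e : E // lam e ≠ 0} := ⟨fun x => x.2 (hno x.1)⟩
    exact linearIndependent_empty_type
  -- the finset of support elements other than e₀
  set t : Finset E := Finset.univ.filter (fun e => lam e ≠ 0 ∧ e ≠ e₀) with ht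
  have he₀t : e₀ ∉ t := by simp [ht]
  set n : ℕ := t.card with hn
  set g : Fin n → E := fun i => ((t.equivFin.symm i : t) : E) with hg
  have hgt : ∀ i, g i ∈ t := fun i => (t.equivFin.symm i).2
  -- columns over t are linearly independent
  have hss : (↑t : Set E) ⊂ {e : E | lam e ≠ 0} := by
    constructor
    · intro e he
      simp [ht] at he
      exact he.1
    · intro hsub
      have := hsub (Set.mem_setOf.mpr he₀)
      simp [ht] at this
  have hind := hmin (↑t : Set E) hss
  have hcols : LinearIndependent ℝ (fun i : Fin n => fun v : V => M v (g i)) := by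
    have hι : Function.Injective
        (fun i : Fin n => (⟨g i, Finset.mem_coe.mpr (hgt i)⟩ : (↑t : Set E))) := by
      intro a b hab
      have : g a = g b := congrArg Subtype.val hab
      have : t.equivFin.symm a = t.equivFin.symm b := Subtype.ext this
      exact t.equivFin.symm.injective this
    exact hind.comp _ hι
  obtain ⟨f, hdet⟩ := exists_invertible_submatrix M g hcols
  set A : Matrix (Fin n) (Fin n) ℝ := M.submatrix f g with hA
  have hdetne : A.det ≠ 0 := by
    intro h
    rw [h] at hdet
    exact (not_isUnit_zero hdet : False)
  have hd : A.det = 1 ∨ A.det = -1 := by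
    rcases hTU n f g with h | h | h
    · left; exact h
    · exact absurd h hdetne
    · right; exact h
  -- the linear system
  set c : Fin n → ℝ := fun j => M (f j) e₀ with hc
  set bb : Fin n → ℝ := fun j => -lam e₀ * M (f j) e₀ with hbb
  have hAx : A.mulVec (fun i => lam (g i)) = bb := by
    funext j
    have huniv : ∑ e, M (f j) e * lam e = 0 := by
      have := congrFun hker (f j)
      simpa [Matrix.mulVec, dotProduct] using this
    have h1 : ∑ i : Fin n, M (f j) (g i) * lam (g i) = ∑ e ∈ t, M (f j) e * lam e := by
      rw [← Finset.sum_coe_sort t (fun e => M (f j) e * lam e)]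
      exact Fintype.sum_equiv t.equivFin.symm _ _ (fun i => rfl)
    have h2 : ∑ e ∈ insert e₀ t, M (f j) e * lam e = ∑ e, M (f j) e * lam e := by
      apply Finset.sum_subset (Finset.subset_univ _)
      intro e _ he
      have hlz : lam e = 0 := by
        by_contra hne
        rcases eq_or_ne e e₀ with h | h
        · exact he (by simp [h])
        · exact he (Finset.mem_insert_of_mem (by simp [ht, hne, h]))
      simp [hlz]
    rw [Finset.sum_insert he₀t] at h2
    have : ∑ e ∈ t, M (f j) e * lam e = -lam e₀ * M (f j) e₀ := by
      linear_combination h2 + huniv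
    simp only [Matrix.mulVec, dotProduct, hA, Matrix.submatrix_apply]
    rw [h1, this]
  have hcr : ∀ i, A.det * lam (g i) = (A.updateCol i bb).det := by
    intro i
    have hx : (fun i => lam (g i)) = A⁻¹ *ᵥ bb := by
      rw [← hAx, Matrix.mulVec_mulVec, Matrix.nonsing_inv_mul A hdet, Matrix.one_mulVec]
    have := Matrix.det_smul_inv_mulVec_eq_cramer A bb hdet
    have h3 : A.det • (fun i => lam (g i)) = Matrix.cramer A bb := by
      rw [hx, ← Matrix.smul_mulVec] at *
      exact this
    have := congrFun h3 i
    simpa [Matrix.cramer_apply] using this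
  have key : ∀ e, lam e ≠ 0 → lam e = lam e₀ ∨ lam e = -lam e₀ := by
    intro e₁ he₁
    rcases eq_or_ne e₁ e₀ with h | h
    · left; rw [h]
    have he₁t : e₁ ∈ t := by simp [ht, he₁, h]
    set i : Fin n := t.equivFin ⟨e₁, he₁t⟩ with hi
    have hgi : g i = e₁ := by
      simp [hg, hi]
    have hdetupd : (A.updateCol i bb).det
        = (-lam e₀) * (M.submatrix f (Function.update g i e₀)).det := by
      have : bb = (-lam e₀) • c := by
        funext j; simp [hbb, hc]
      rw [this, Matrix.det_updateCol_smul]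
      congr 1
      congr 1
      ext j i'
      by_cases hii : i' = i
      · subst hii
        simp [Matrix.updateCol_apply, Matrix.submatrix_apply, hc]
      · simp [Matrix.updateCol_apply, Matrix.submatrix_apply, hii,
          Function.update_apply, hA]
    have heq := hcr i
    rw [hdetupd, hgi] at heq
    rcases hTU n f (Function.update g i e₀) with h5 | h5 | h5 <;> rw [h5] at heq <;>
      rcases hd with h4 | h4 <;> rw [h4] at heq <;>
      first
        | (left; linarith)
        | (right; linarith)
        | (exfalso; apply he₁; linarith)
  refine ⟨lam e₀, fun e => lam e / lam e₀, ?_, ?_, ?_⟩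
  · have : (fun e => lam e / lam e₀) = (lam e₀)⁻¹ • lam := by
      funext e
      simp [div_eq_inv_mul]
    rw [this, Matrix.mulVec_smul, hker, smul_zero]
  · intro e
    by_cases h : lam e = 0
    · right; left; simp [h]
    · rcases key e h with h1 | h1
      · right; right; show lam e / lam e₀ = 1; rw [h1, div_self he₀]
      · left; show lam e / lam e₀ = -1; rw [h1, neg_div, div_self he₀]
  · funext e
    show lam e = lam e₀ * (lam e / lam e₀)
    rw [mul_comm, div_mul_cancel₀ _ he₀]
end

section
/- Let Λ be a lattice (discrete subgroup) in a finite-dimensional real inner product space F, and for λ ∈ Λ let V_λ = {x ∈ F : ‖x - λ‖ ≤ ‖x - μ‖ for all μ ∈ Λ} be its Voronoi cell. Then for any λ ∈ Λ, V_λ ∩ V_0 ≠ ∅ if and only if λ/2 ∈ V_λ ∩ V_0. -/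
private lemma key_half {F : Type*} [NormedAddCommGroup F] [InnerProductSpace ℝ F]
    (x l ν : F) (ha : ‖x‖ ≤ ‖x - ν‖) (hb : ‖x - l‖ ≤ ‖x - (l - ν)‖) :
    ‖(1 / 2 : ℝ) • l‖ ≤ ‖(1 / 2 : ℝ) • l - ν‖ := by
  have hnn := norm_nonneg ((1/2:ℝ) • l - ν)
  have hnn2 := norm_nonneg ((1/2:ℝ) • l)
  suffices hsq : ‖(1/2:ℝ) • l‖ ^ 2 ≤ ‖(1/2:ℝ) • l - ν‖ ^ 2 by nlinarith
  have h1 : ‖x - ν‖ ^ 2 = ‖x‖ ^ 2 - 2 * inner ℝ x ν + ‖ν‖ ^ 2 := norm_sub_sq_real x ν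
  have h2 : x - (l - ν) = (x - l) + ν := by abel
  have h3 : ‖(x - l) + ν‖ ^ 2 = ‖x - l‖ ^ 2 + 2 * inner ℝ (x - l) ν + ‖ν‖ ^ 2 :=
    norm_add_sq_real _ _
  have h4 : ‖(1/2:ℝ) • l - ν‖ ^ 2
      = ‖(1/2:ℝ) • l‖ ^ 2 - 2 * inner ℝ ((1/2:ℝ) • l) ν + ‖ν‖ ^ 2 := norm_sub_sq_real _ _
  have h5 : (inner ℝ ((1/2:ℝ) • l) ν : ℝ) = (1/2) * inner ℝ l ν := real_inner_smul_left _ _ _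
  have h6 : (inner ℝ (x - l) ν : ℝ) = inner ℝ x ν - inner ℝ l ν := inner_sub_left _ _ _
  have ha2 : ‖x‖ ^ 2 ≤ ‖x - ν‖ ^ 2 := by
    exact pow_le_pow_left₀ (norm_nonneg x) ha 2
  have hb2 : ‖x - l‖ ^ 2 ≤ ‖x - (l - ν)‖ ^ 2 :=
    pow_le_pow_left₀ (norm_nonneg _) hb 2
  rw [h2, h3] at hb2
  nlinarith [ha2, hb2]

/-- For a lattice Λ in a finite-dimensional real inner product space,
the Voronoi cells of λ and 0 intersect iff λ/2 lies in their intersection. -/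
theorem stmt_1 {F : Type*} [NormedAddCommGroup F] [InnerProductSpace ℝ F]
    [FiniteDimensional ℝ F]
    (Λ : AddSubgroup F) (hdisc : DiscreteTopology Λ)
    (l : F) (hl : l ∈ Λ) :
    ({x : F | ∀ μ ∈ Λ, ‖x - l‖ ≤ ‖x - μ‖} ∩ {x : F | ∀ μ ∈ Λ, ‖x - 0‖ ≤ ‖x - μ‖}).Nonempty ↔
      (1 / 2 : ℝ) • l ∈
        ({x : F | ∀ μ ∈ Λ, ‖x - l‖ ≤ ‖x - μ‖} ∩ {x : F | ∀ μ ∈ Λ, ‖x - 0‖ ≤ ‖x - μ‖}) := by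
  constructor
  · rintro ⟨x, hx1, hx2⟩
    simp only [Set.mem_setOf_eq, Set.mem_inter_iff, sub_zero] at hx1 hx2 ⊢
    have key : ∀ ν ∈ Λ, ‖(1/2:ℝ) • l‖ ≤ ‖(1/2:ℝ) • l - ν‖ := by
      intro ν hν
      exact key_half x l ν (hx2 ν hν) (hx1 (l - ν) (sub_mem hl hν))
    constructor
    · intro μ hμ
      have h1 : (1/2:ℝ) • l - l = -((1/2:ℝ) • l) := by
        rw [← one_smul ℝ l]; rw [smul_smul]; module
      have h2 : (1/2:ℝ) • l - μ = -((1/2:ℝ) • l - (l - μ)) := by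
        rw [neg_sub]; module
      rw [h1, norm_neg, h2, norm_neg]
      exact key (l - μ) (sub_mem hl hμ)
    · exact key
  · intro h
    exact ⟨(1/2:ℝ) • l, h⟩
end

section
/- Let G be a finite directed graph with signed incidence matrix M. Suppose that for every edge e = (u,v) of G there exists z_e ∈ (ℤ_{≥0})^E with e + z_e ∈ ker(M) ∩ ℤ^E (i.e., every edge is part of a positive integer cycle). Then G is strongly connected as a directed graph: for every directed edge e = (u,v) there is a directed path in G from v to u. -/
/-- The signed incidence matrix of a finite directed graph. -/
def signedInc {V E : Type*} [DecidableEq V] (src tgt : E → V) : Matrix V E ℝ :=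
  fun v e => (if tgt e = v then (1 : ℝ) else 0) - (if src e = v then (1 : ℝ) else 0)

/-- If every edge e of a finite directed graph is part of a positive
integer cycle (there is a nonnegative integer z_e with e + z_e ∈ ker(M) ∩ ℤ^E), then
the graph is strongly connected: for every edge e there is a directed path from its
head to its tail. -/
theorem stmt_4 {V E : Type*} [Fintype V] [Fintype E] [DecidableEq V] [DecidableEq E]
    (src tgt : E → V)
    (hpos : ∀ e : E, ∃ z : E → ℤ, (∀ f, 0 ≤ z f) ∧
      (signedInc src tgt).mulVec (fun f => (if f = e then (1 : ℝ) else 0) + (z f : ℝ)) = 0) :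
    ∀ e : E, Relation.ReflTransGen
      (fun x y : V => ∃ f : E, src f = x ∧ tgt f = y) (tgt e) (src e) := by
  classical
  intro e
  obtain ⟨z, hz, hw⟩ := hpos e
  set r : V → V → Prop := fun x y => ∃ f : E, src f = x ∧ tgt f = y with hr
  set w : E → ℝ := fun f => (if f = e then (1 : ℝ) else 0) + (z f : ℝ) with hwdef
  set S : Finset V := Finset.univ.filter (fun v => Relation.ReflTransGen r (tgt e) v) with hS
  have hmemS : ∀ v, v ∈ S ↔ Relation.ReflTransGen r (tgt e) v := by
    intro v; simp [hS]
  have hclosed : ∀ f : E, src f ∈ S → tgt f ∈ S := by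
    intro f hf
    rw [hmemS] at *
    exact hf.tail ⟨f, rfl, rfl⟩
  have hwnonneg : ∀ f, 0 ≤ w f := by
    intro f
    have h1 : (0 : ℝ) ≤ (z f : ℝ) := by exact_mod_cast hz f
    have h2 : (0 : ℝ) ≤ (if f = e then (1 : ℝ) else 0) := by positivity
    simpa [hwdef] using add_nonneg h2 h1
  have h0 : ∑ v ∈ S, (signedInc src tgt).mulVec w v = 0 := by
    simp only [hw, Pi.zero_apply, Finset.sum_const_zero]
  have hsum : ∑ f : E, w f * ((if tgt f ∈ S then (1 : ℝ) else 0) - (if src f ∈ S then 1 else 0)) = 0 := by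
    have hswap : ∑ v ∈ S, (signedInc src tgt).mulVec w v
        = ∑ f : E, w f * ((if tgt f ∈ S then (1 : ℝ) else 0) - (if src f ∈ S then 1 else 0)) := by
      simp only [Matrix.mulVec, dotProduct, signedInc]
      rw [Finset.sum_comm]
      refine Finset.sum_congr rfl fun f _ => ?_
      rw [← Finset.sum_mul, Finset.sum_sub_distrib, Finset.sum_ite_eq, Finset.sum_ite_eq,
        mul_comm]
    rw [← hswap, h0]
  have hnn : ∀ f ∈ Finset.univ, (0:ℝ) ≤ w f * ((if tgt f ∈ S then (1 : ℝ) else 0) - (if src f ∈ S then 1 else 0)) := by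
    intro f _
    by_cases h : src f ∈ S
    · simp [h, hclosed f h]
    · rw [if_neg h, sub_zero]
      split_ifs with h'
      · simpa using hwnonneg f
      · simp
  have heach := (Finset.sum_eq_zero_iff_of_nonneg hnn).mp hsum e (Finset.mem_univ e)
  have hte : tgt e ∈ S := (hmemS _).mpr Relation.ReflTransGen.refl
  by_contra hse
  have hseS : src e ∉ S := fun h => hse ((hmemS _).mp h)
  rw [if_pos hte, if_neg hseS, sub_zero, mul_one] at heach
  have hwe : w e = 1 + (z e : ℝ) := by simp [hwdef]
  have h1 : (0 : ℝ) ≤ (z e : ℝ) := by exact_mod_cast hz e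
  rw [hwe] at heach
  linarith
end

section
/- Let M be a totally unimodular matrix over ℝ with columns indexed by E, let Λ = ker(M) ∩ ℤ^E, and let λ ∈ Λ. If the Voronoi cells satisfy V_λ ∩ V_0 ≠ ∅ (Voronoi cells taken inside the real vector space ker(M) with the Euclidean inner product), then λ is Eulerian, i.e., every coordinate of λ lies in {-1, 0, 1}. -/
/-- Membership in the lattice of integer flows Λ = ker(M) ∩ ℤ^E. -/
def latMem {V E : Type*} [Fintype E] (M : Matrix V E ℝ) (x : E → ℝ) : Prop :=
  M.mulVec x = 0 ∧ ∀ e, ∃ n : ℤ, x e = n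

open Matrix Finset
/-- A square integer system with linearly independent columns (over ℝ) whose minors are
all 0, ±1 and with integer RHS has only integer solutions. -/
lemma lemA {V n : Type*} [Fintype V] [Fintype n] [DecidableEq n]
    (N : Matrix V n ℤ)
    (hTU : ∀ f : n → V, (N.submatrix f id).det = 1 ∨ (N.submatrix f id).det = 0 ∨
      (N.submatrix f id).det = -1)
    (y : n → ℝ) (b : V → ℤ)
    (hy : (N.map (Int.cast : ℤ → ℝ)).mulVec y = fun v => (b v : ℝ))
    (hker : ∀ d : n → ℝ, (N.map (Int.cast : ℤ → ℝ)).mulVec d = 0 → d = 0) :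
    ∀ f, ∃ m : ℤ, y f = m := by
  classical
  set A : Matrix V n ℝ := N.map (Int.cast : ℤ → ℝ) with hA
  have hkerbot : LinearMap.ker A.mulVecLin = ⊥ :=
    LinearMap.ker_eq_bot'.mpr (fun d hd => hker d hd)
  have hrank : A.rank = Fintype.card n := by
    have h2 := LinearMap.finrank_range_add_finrank_ker A.mulVecLin
    rw [hkerbot, finrank_bot, add_zero, Module.finrank_fintype_fun_eq_card] at h2
    simpa [Matrix.rank] using h2
  have hspanrows : Submodule.span ℝ (Set.range A) = ⊤ := by
    apply Submodule.eq_top_of_finrank_eq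
    have h1 : Aᵀ.rank = Fintype.card n := by rw [Matrix.rank_transpose, hrank]
    rw [Matrix.rank_eq_finrank_span_cols, Matrix.col, Matrix.transpose_transpose] at h1
    rw [Module.finrank_fintype_fun_eq_card]
    exact h1
  obtain ⟨t, htsub, htspan, htli⟩ := exists_linearIndependent ℝ (Set.range A)
  rw [hspanrows] at htspan
  have htfin : t.Finite := htli.setFinite
  haveI := htfin.fintype
  let bas : Module.Basis t ℝ (n → ℝ) := Module.Basis.mk htli (by rw [Subtype.range_coe, htspan])
  have hcard : Fintype.card n = Fintype.card t := by
    rw [← Module.finrank_eq_card_basis bas, Module.finrank_fintype_fun_eq_card]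
  let e : n ≃ t := Fintype.equivOfCardEq hcard
  have hrow : ∀ p : t, ∃ v : V, A v = (p : n → ℝ) := fun p => htsub p.2
  let r : t → V := fun p => (hrow p).choose
  have hr : ∀ p : t, A (r p) = (p : n → ℝ) := fun p => (hrow p).choose_spec
  let B : Matrix n n ℝ := A.submatrix (fun i => r (e i)) id
  have hBrows : ∀ i, B i = ((e i : t) : n → ℝ) := fun i => hr (e i)
  have hli2 : LinearIndependent ℝ (fun i => B i) := by
    have := htli.comp e e.injective
    convert this using 1
    funext i
    exact hBrows i
    rfl
    rfl
  have hBunit : IsUnit B := Matrix.linearIndependent_rows_iff_isUnit.mp hli2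
  have hBdet : B.det ≠ 0 := (Matrix.isUnit_iff_isUnit_det B |>.mp hBunit).ne_zero
  let B₀ : Matrix n n ℤ := N.submatrix (fun i => r (e i)) id
  have hB : B = B₀.map (Int.cast : ℤ → ℝ) := by
    exact Matrix.submatrix_map _ _ _ N
  have hdetcast : B.det = ((B₀.det : ℤ) : ℝ) := by
    rw [hB]
    exact (RingHom.map_det (Int.castRingHom ℝ) B₀).symm
  have hdet : B₀.det = 1 ∨ B₀.det = -1 := by
    rcases hTU (fun i => r (e i)) with h | h | h
    · exact Or.inl h
    · exfalso; apply hBdet; rw [hdetcast, h]; norm_num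
    · exact Or.inr h
  let b₀ : n → ℤ := fun i => b (r (e i))
  have hBy : B.mulVec y = fun i => (b₀ i : ℝ) := by
    funext i
    have h3 := congrFun hy (r (e i))
    simpa [Matrix.mulVec, dotProduct, B] using h3
  let z : n → ℤ := B₀.det • Matrix.cramer B₀ b₀
  have hBz : B₀.mulVec z = b₀ := by
    have h4 := Matrix.mulVec_cramer B₀ b₀
    have : B₀.mulVec z = B₀.det • (B₀.det • b₀) := by
      rw [show z = B₀.det • Matrix.cramer B₀ b₀ from rfl, Matrix.mulVec_smul, h4]
    rw [this]
    funext i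
    rcases hdet with h | h <;> simp [h]
  have hBzR : B.mulVec (fun i => (z i : ℝ)) = fun i => (b₀ i : ℝ) := by
    funext i
    have h5 := congrFun hBz i
    simp only [Matrix.mulVec, dotProduct, hB, Matrix.map_apply] at h5 ⊢
    push_cast
    exact_mod_cast congrArg (Int.cast : ℤ → ℝ) h5
  have hinj : Function.Injective B.mulVec :=
    Matrix.mulVec_injective_iff_isUnit.mpr hBunit
  have hyz : y = fun i => (z i : ℝ) := hinj (by rw [hBy, hBzR])
  intro f
  exact ⟨z f, by rw [hyz]⟩

lemma tu_int_det {V E : Type*} [Fintype V] [Fintype E] (N : Matrix V E ℤ)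
    (hTU : ∀ (k : ℕ) (f : Fin k → V) (g : Fin k → E),
      (N.submatrix f g).det = 1 ∨ (N.submatrix f g).det = 0 ∨ (N.submatrix f g).det = -1)
    {n : Type*} [Fintype n] [DecidableEq n] (f : n → V) (g : n → E) :
    (N.submatrix f g).det = 1 ∨ (N.submatrix f g).det = 0 ∨ (N.submatrix f g).det = -1 := by
  classical
  let e : Fin (Fintype.card n) ≃ n := (Fintype.equivFin n).symm
  have h : (N.submatrix f g).det = (N.submatrix (f ∘ e) (g ∘ e)).det := by
    rw [← Matrix.submatrix_submatrix, Matrix.det_submatrix_equiv_self]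
  rw [h]
  exact hTU _ _ _

/-- TU rounding: a real kernel vector can be rounded to an integer kernel vector. -/
lemma tu_round {V E : Type*} [Fintype V] [Fintype E] (N : Matrix V E ℤ)
    (hTU : ∀ (k : ℕ) (f : Fin k → V) (g : Fin k → E),
      (N.submatrix f g).det = 1 ∨ (N.submatrix f g).det = 0 ∨ (N.submatrix f g).det = -1)
    (n : ℕ) :
    ∀ (y : E → ℝ) (s : Finset E), (∀ f ∉ s, ((⌊y f⌋ : ℝ) = y f)) → s.card ≤ n →
    (N.map (Int.cast : ℤ → ℝ)).mulVec y = 0 →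
    ∃ γ : E → ℤ, (N.map (Int.cast : ℤ → ℝ)).mulVec (fun f => (γ f : ℝ)) = 0 ∧
      ∀ f, ⌊y f⌋ ≤ γ f ∧ γ f ≤ ⌈y f⌉ := by
  classical
  induction n with
  | zero =>
    intro y s hs hcard hker
    have hse : s = ∅ := Finset.card_eq_zero.mp (Nat.le_zero.mp hcard)
    have hint : ∀ f, ((⌊y f⌋ : ℝ) = y f) := fun f => hs f (by simp [hse])
    refine ⟨fun f => ⌊y f⌋, ?_, fun f => ?_⟩
    · have : (fun f => ((⌊y f⌋ : ℤ) : ℝ)) = y := funext hint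
      rw [this]; exact hker
    · constructor
      · exact le_refl _
      · rw [← hint f]; simp
  | succ n ih =>
    intro y s hs hcard hker
    by_cases hint : ∀ f, ((⌊y f⌋ : ℝ) = y f)
    · refine ⟨fun f => ⌊y f⌋, ?_, fun f => ?_⟩
      · have : (fun f => ((⌊y f⌋ : ℤ) : ℝ)) = y := funext hint
        rw [this]; exact hker
      · exact ⟨le_refl _, by rw [← hint f]; simp⟩
    push_neg at hint
    obtain ⟨f1, hf1⟩ := hint
    by_cases hd : ∃ d : E → ℝ, d ≠ 0 ∧ (∀ f, ((⌊y f⌋ : ℝ) = y f) → d f = 0) ∧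
        (N.map (Int.cast : ℤ → ℝ)).mulVec d = 0
    · -- move along d to reduce the number of fractional coordinates
      obtain ⟨d, hdne, hdsupp, hdker⟩ := hd
      have hfrac : ∀ f, d f ≠ 0 → ((⌊y f⌋ : ℝ) < y f ∧ y f < (⌈y f⌉ : ℝ)) := by
        intro f hf
        have hne : ((⌊y f⌋ : ℝ)) ≠ y f := fun h => hf (hdsupp f h)
        refine ⟨lt_of_le_of_ne (Int.floor_le _) hne, ?_⟩
        rcases lt_or_eq_of_le (Int.le_ceil (y f)) with h | h
        · exact h
        · exfalso; apply hne
          rw [h, Int.floor_intCast]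
      set S : Finset E := Finset.univ.filter (fun f => d f ≠ 0) with hSdef
      have hSne : S.Nonempty := by
        obtain ⟨f, hf⟩ := Function.ne_iff.mp hdne
        refine ⟨f, ?_⟩
        simp only [hSdef, Finset.mem_filter, Finset.mem_univ, true_and]
        simpa using hf
      set step : E → ℝ := fun f =>
        if 0 < d f then ((⌈y f⌉ : ℝ) - y f) / d f else (y f - (⌊y f⌋ : ℝ)) / (-(d f))
        with hstepdef
      obtain ⟨f0, hf0S, hf0min⟩ := Finset.exists_min_image S step hSne
      have hdf0 : d f0 ≠ 0 := by simpa [hSdef] using hf0S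
      set t : ℝ := step f0 with htdef
      have hstep_pos : ∀ f, d f ≠ 0 → 0 < step f := by
        intro f hf
        rcases (hfrac f hf) with ⟨h1, h2⟩
        by_cases hpos : 0 < d f
        · rw [hstepdef]; simp only [if_pos hpos]
          exact div_pos (by linarith) hpos
        · rw [hstepdef]; simp only [if_neg hpos]
          have : d f < 0 := lt_of_le_of_ne (not_lt.mp hpos) hf
          exact div_pos (by linarith) (by linarith)
      have ht0 : 0 ≤ t := (hstep_pos f0 hdf0).le
      set y' : E → ℝ := fun f => y f + t * d f with hy'def
      have hy'ker : (N.map (Int.cast : ℤ → ℝ)).mulVec y' = 0 := by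
        have : y' = y + t • d := rfl
        rw [this, Matrix.mulVec_add, Matrix.mulVec_smul, hker, hdker]
        simp
      have hbounds : ∀ f, ((⌊y f⌋ : ℝ) ≤ y' f ∧ y' f ≤ (⌈y f⌉ : ℝ)) := by
        intro f
        rcases lt_trichotomy (d f) 0 with hneg | hzero | hpos
        · have hfr := hfrac f hneg.ne
          have hts : t ≤ step f := hf0min f (by simp [hSdef, hneg.ne])
          have hstepf : step f = (y f - (⌊y f⌋ : ℝ)) / (-(d f)) := by
            rw [hstepdef]; simp only [if_neg (not_lt.mpr hneg.le)]
          rw [hstepf] at hts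
          have h1 : t * (-(d f)) ≤ y f - (⌊y f⌋ : ℝ) := (le_div_iff₀ (by linarith)).mp hts
          have h2 : t * d f ≤ 0 := mul_nonpos_of_nonneg_of_nonpos ht0 hneg.le
          constructor
          · rw [hy'def]; dsimp only; linarith
          · rw [hy'def]; dsimp only; linarith [hfr.2]
        · rw [hy'def]; dsimp only; rw [hzero]
          constructor
          · simpa using Int.floor_le (y f)
          · simpa using Int.le_ceil (y f)
        · have hfr := hfrac f hpos.ne'
          have hts : t ≤ step f := hf0min f (by simp [hSdef, hpos.ne'])
          have hstepf : step f = ((⌈y f⌉ : ℝ) - y f) / d f := by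
            rw [hstepdef]; simp only [if_pos hpos]
          rw [hstepf] at hts
          have h1 : t * d f ≤ (⌈y f⌉ : ℝ) - y f := (le_div_iff₀ hpos).mp hts
          have h2 : 0 ≤ t * d f := mul_nonneg ht0 hpos.le
          constructor
          · rw [hy'def]; dsimp only; linarith [hfr.1]
          · rw [hy'def]; dsimp only; linarith
      have hf0frac : ((⌊y f0⌋ : ℝ)) ≠ y f0 := by
        intro h
        exact hdf0 (hdsupp f0 h)
      have hf0s : f0 ∈ s := by
        by_contra h
        exact hf0frac (hs f0 h)
      have hy'int : ∀ f, ((⌊y' f⌋ : ℝ) ≠ y' f) → (((⌊y f⌋ : ℝ) ≠ y f) ∧ f ≠ f0) := by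
        intro f h
        constructor
        · intro hyf
          apply h
          have hdz : d f = 0 := hdsupp f hyf
          have : y' f = y f := by rw [hy'def]; dsimp only; rw [hdz]; ring
          rw [this, ← hyf, Int.floor_intCast]
        · rintro rfl
          apply h
          by_cases hpos : 0 < d f
          · have : y' f = ((⌈y f⌉ : ℝ)) := by
              rw [hy'def, htdef, hstepdef]; dsimp only
              rw [if_pos hpos, div_mul_cancel₀ _ (ne_of_gt hpos)]
              ring
            rw [this, Int.floor_intCast]
          · have hneg : d f < 0 := lt_of_le_of_ne (not_lt.mp hpos) hdf0
            have : y' f = ((⌊y f⌋ : ℝ)) := by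
              rw [hy'def, htdef, hstepdef]; dsimp only
              rw [if_neg hpos, div_mul_eq_mul_div, mul_div_assoc, div_neg,
                div_self hneg.ne, mul_neg, mul_one]
              ring
            rw [this, Int.floor_intCast]
      have hcard' : (s.erase f0).card ≤ n := by
        have := Finset.card_erase_of_mem hf0s
        omega
      have hs' : ∀ f ∉ s.erase f0, ((⌊y' f⌋ : ℝ) = y' f) := by
        intro f hf
        by_contra h
        obtain ⟨h1, h2⟩ := hy'int f h
        apply hf
        rw [Finset.mem_erase]
        exact ⟨h2, by by_contra hfs; exact h1 (hs f hfs)⟩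
      obtain ⟨γ, hγ1, hγ2⟩ := ih y' (s.erase f0) hs' hcard' hy'ker
      refine ⟨γ, hγ1, fun f => ⟨?_, ?_⟩⟩
      · exact le_trans (Int.le_floor.mpr (hbounds f).1) (hγ2 f).1
      · exact le_trans (hγ2 f).2 (Int.ceil_le.mpr (hbounds f).2)
    · -- fractional columns are independent: contradiction via lemA
      exfalso
      push_neg at hd
      haveI : Fintype {f : E // (⌊y f⌋ : ℝ) ≠ y f} := Fintype.ofFinite _
      set A' : Matrix V {f : E // (⌊y f⌋ : ℝ) ≠ y f} ℤ :=
        N.submatrix id (Subtype.val) with hA'def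
      have hTU' : ∀ f : {f : E // (⌊y f⌋ : ℝ) ≠ y f} → V,
          (A'.submatrix f id).det = 1 ∨ (A'.submatrix f id).det = 0 ∨
          (A'.submatrix f id).det = -1 := by
        intro f
        have h : A'.submatrix f id = N.submatrix f (Subtype.val) := by
          rw [hA'def, Matrix.submatrix_submatrix]
          rfl
        rw [h]
        exact tu_int_det N hTU f Subtype.val
      set b : V → ℤ := fun v => -∑ f ∈ Finset.univ.filter (fun f => (⌊y f⌋ : ℝ) = y f),
        N v f * ⌊y f⌋ with hbdef
      have hy' : (A'.map (Int.cast : ℤ → ℝ)).mulVec (fun p => y p.1) =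
          fun v => ((b v : ℤ) : ℝ) := by
        funext v
        have h0 := congrFun hker v
        simp only [Matrix.mulVec, dotProduct, Matrix.map_apply, Pi.zero_apply] at h0 ⊢
        have hsplit := Finset.sum_filter_add_sum_filter_not Finset.univ
          (fun f => (⌊y f⌋ : ℝ) = y f) (fun f => ((N v f : ℝ)) * y f)
        rw [← hsplit] at h0
        have hsub : ∑ p : {f : E // (⌊y f⌋ : ℝ) ≠ y f}, ((N v p.1 : ℝ)) * y p.1 =
            ∑ f ∈ Finset.univ.filter (fun f => ¬ ((⌊y f⌋ : ℝ) = y f)), ((N v f : ℝ)) * y f := by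
          exact (Finset.sum_subtype (p := fun f => ((⌊y f⌋ : ℝ) ≠ y f))
            (Finset.univ.filter (fun f => ¬ ((⌊y f⌋ : ℝ) = y f)))
            (by intro x; simp only [Finset.mem_filter, Finset.mem_univ, true_and])
            (fun f => ((N v f : ℝ)) * y f)).symm
        rw [hA'def]
        simp only [Matrix.submatrix_apply, id_eq]
        rw [hsub]
        have hfirst : ∑ f ∈ Finset.univ.filter (fun f => (⌊y f⌋ : ℝ) = y f),
            ((N v f : ℝ)) * y f = ∑ f ∈ Finset.univ.filter (fun f => (⌊y f⌋ : ℝ) = y f),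
            ((N v f : ℝ)) * ((⌊y f⌋ : ℤ) : ℝ) := by
          apply Finset.sum_congr rfl
          intro f hf
          rw [Finset.mem_filter] at hf
          rw [hf.2]
        rw [hbdef]
        push_cast
        linarith
      have hker' : ∀ dd : {f : E // (⌊y f⌋ : ℝ) ≠ y f} → ℝ,
          (A'.map (Int.cast : ℤ → ℝ)).mulVec dd = 0 → dd = 0 := by
        intro dd hdd
        set D : E → ℝ := fun f => if h : (⌊y f⌋ : ℝ) ≠ y f then dd ⟨f, h⟩ else 0 with hDdef
        have hDker : (N.map (Int.cast : ℤ → ℝ)).mulVec D = 0 := by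
          funext v
          have h0 := congrFun hdd v
          simp only [Matrix.mulVec, dotProduct, Matrix.map_apply, Pi.zero_apply] at h0 ⊢
          rw [← h0]
          rw [hA'def]
          simp only [Matrix.submatrix_apply, id_eq]
          rw [show (∑ x : {f : E // (⌊y f⌋ : ℝ) ≠ y f}, ((N v x.1 : ℝ)) * dd x) =
              ∑ f ∈ Finset.univ.filter (fun f => ¬ ((⌊y f⌋ : ℝ) = y f)), ((N v f : ℝ)) * D f from ?_]
          · rw [← Finset.sum_filter_add_sum_filter_not Finset.univ
              (fun f => ¬ ((⌊y f⌋ : ℝ) = y f)) (fun f => ((N v f : ℝ)) * D f)]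
            have : ∑ f ∈ Finset.univ.filter (fun f => ¬¬((⌊y f⌋ : ℝ) = y f)),
                ((N v f : ℝ)) * D f = 0 := by
              apply Finset.sum_eq_zero
              intro f hf
              rw [Finset.mem_filter, not_not] at hf
              rw [hDdef]
              simp [not_not.mpr hf.2]
            rw [this]
            ring
          · rw [Finset.sum_subtype (p := fun f => ((⌊y f⌋ : ℝ) ≠ y f))
              (Finset.univ.filter (fun f => ¬ ((⌊y f⌋ : ℝ) = y f)))
              (by intro x; simp only [Finset.mem_filter, Finset.mem_univ, true_and])
              (fun f => ((N v f : ℝ)) * D f)]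
            apply Finset.sum_congr rfl
            intro p _
            rw [hDdef]
            simp [p.2]
        have hD0 : D = 0 := by
          by_contra hD
          exact (hd D hD (fun f hf => by rw [hDdef]; simp [not_not.mpr hf]) hDker) 
        funext p
        have := congrFun hD0 p.1
        rw [hDdef] at this
        simpa [p.2] using this
      have := lemA A' hTU' (fun p => y p.1) b hy' hker' ⟨f1, hf1⟩
      obtain ⟨m, hm⟩ := this
      apply hf1
      rw [hm, Int.floor_intCast]

/-- Let M be totally unimodular, Λ = ker(M) ∩ ℤ^E and λ ∈ Λ. If the
Voronoi cells V_λ and V_0 (inside ker(M) with the Euclidean inner product) have a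
common point, then λ is Eulerian: all of its coordinates lie in {-1, 0, 1}. -/
theorem stmt_6 {V E : Type*} [Fintype V] [Fintype E]
    (M : Matrix V E ℝ)
    (hTU : ∀ (k : ℕ) (f : Fin k → V) (g : Fin k → E),
      (M.submatrix f g).det = 1 ∨ (M.submatrix f g).det = 0 ∨ (M.submatrix f g).det = -1)
    (lam : E → ℝ) (hlam : latMem M lam)
    (x : E → ℝ) (hxker : M.mulVec x = 0)
    (hxVlam : ∀ μ : E → ℝ, latMem M μ →
      ∑ e, (x e - lam e) ^ 2 ≤ ∑ e, (x e - μ e) ^ 2)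
    (hxV0 : ∀ μ : E → ℝ, latMem M μ →
      ∑ e, (x e) ^ 2 ≤ ∑ e, (x e - μ e) ^ 2) :
    ∀ e, lam e = -1 ∨ lam e = 0 ∨ lam e = 1 := by
  classical
  have hint : ∀ v e, ∃ m : ℤ, M v e = m := by
    intro v e
    have h := hTU 1 (fun _ => v) (fun _ => e)
    rw [Matrix.det_fin_one] at h
    simp only [Matrix.submatrix_apply] at h
    rcases h with h | h | h
    · exact ⟨1, by rw [h]; norm_num⟩
    · exact ⟨0, by rw [h]; norm_num⟩
    · exact ⟨-1, by rw [h]; norm_num⟩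
  set N : Matrix V E ℤ := fun v e => (hint v e).choose with hNdef
  have hMN : M = N.map (Int.cast : ℤ → ℝ) := by
    ext v e
    exact (hint v e).choose_spec
  have hTUint : ∀ (k : ℕ) (f : Fin k → V) (g : Fin k → E),
      (N.submatrix f g).det = 1 ∨ (N.submatrix f g).det = 0 ∨ (N.submatrix f g).det = -1 := by
    intro k f g
    have h := hTU k f g
    rw [hMN, Matrix.submatrix_map] at h
    have hc : ((N.submatrix f g).map (Int.cast : ℤ → ℝ)).det = ((N.submatrix f g).det : ℝ) :=
      (RingHom.map_det (Int.castRingHom ℝ) _).symm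
    rw [hc] at h
    rcases h with h | h | h
    · left; exact_mod_cast h
    · right; left; exact_mod_cast h
    · right; right; exact_mod_cast h
  have hlamZ : ∀ f, ∃ m : ℤ, lam f = m := hlam.2
  set lamZ : E → ℤ := fun f => (hlamZ f).choose with hlamZdef
  have hlamc : ∀ f, lam f = (lamZ f : ℝ) := fun f => (hlamZ f).choose_spec
  suffices hZ : ∀ f, lamZ f = -1 ∨ lamZ f = 0 ∨ lamZ f = 1 by
    intro f
    rcases hZ f with h | h | h
    · left; rw [hlamc f, h]; norm_num
    · right; left; rw [hlamc f, h]; norm_num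
    · right; right; rw [hlamc f, h]; norm_num
  by_contra hcon
  push_neg at hcon
  obtain ⟨e0, he0⟩ := hcon
  have he02 : 2 ≤ |lamZ e0| := by
    obtain ⟨h1, h2, h3⟩ := he0
    rcases abs_cases (lamZ e0) with ⟨h, _⟩ | ⟨h, _⟩ <;> omega
  obtain ⟨e, -, he⟩ := Finset.exists_max_image Finset.univ (fun f => |lamZ f|)
    ⟨e0, Finset.mem_univ e0⟩
  set k : ℤ := |lamZ e| with hkdef
  have hk2 : 2 ≤ k := le_trans he02 (he e0 (Finset.mem_univ e0))
  have hk0 : (0:ℝ) < (k:ℝ) := by exact_mod_cast lt_of_lt_of_le (by norm_num) hk2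
  have hbd : ∀ f, |lamZ f| ≤ k := fun f => he f (Finset.mem_univ f)
  set y : E → ℝ := fun f => lam f / (k:ℝ) with hydef
  have hyker : (N.map (Int.cast : ℤ → ℝ)).mulVec y = 0 := by
    have hy2 : y = (k:ℝ)⁻¹ • lam := by
      funext f
      rw [hydef]
      dsimp only [Pi.smul_apply, smul_eq_mul]
      rw [div_eq_inv_mul]
    rw [hy2, Matrix.mulVec_smul, ← hMN, hlam.1, smul_zero]
  obtain ⟨γ, hγker, hγb⟩ := tu_round N hTUint (Finset.univ (α := E)).card y Finset.univ
    (fun f hf => absurd (Finset.mem_univ f) hf) (le_refl _) hyker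
  have hyval : ∀ f, y f = ((lamZ f : ℝ))/(k:ℝ) := by
    intro f
    rw [hydef]
    dsimp only
    rw [hlamc f]
  have hpt : ∀ f, (γ f)^2 ≤ lamZ f * γ f := by
    intro f
    obtain ⟨h1, h2⟩ := hγb f
    have hyle : y f ≤ 1 := by
      rw [hyval, div_le_one hk0]
      exact_mod_cast le_trans (le_abs_self _) (hbd f)
    have hyge : (-1:ℝ) ≤ y f := by
      rw [hyval, le_div_iff₀ hk0]
      have h7 : -k ≤ lamZ f := by
        have := hbd f
        rcases abs_cases (lamZ f) with ⟨h, _⟩ | ⟨h, _⟩ <;> omega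
      have h8 : ((-k : ℤ) : ℝ) ≤ ((lamZ f : ℤ) : ℝ) := by exact_mod_cast h7
      push_cast at h8
      linarith
    have hγle : γ f ≤ 1 := le_trans h2 (Int.ceil_le.mpr (by push_cast; exact hyle))
    have hγge : (-1:ℤ) ≤ γ f := le_trans (Int.le_floor.mpr (by push_cast; exact hyge)) h1
    have hcases : γ f = -1 ∨ γ f = 0 ∨ γ f = 1 := by omega
    rcases hcases with h | h | h
    · have hfl : ⌊y f⌋ ≤ -1 := by omega
      have hylt : y f < 0 := by
        have := Int.floor_lt.mp (show ⌊y f⌋ < (0:ℤ) by omega)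
        simpa using this
      have hlamneg : lamZ f < 0 := by
        by_contra hge
        push_neg at hge
        have : (0:ℝ) ≤ y f := by
          rw [hyval]
          apply div_nonneg _ hk0.le
          exact_mod_cast hge
        linarith
      rw [h]; nlinarith [hlamneg]
    · rw [h]; simp
    · have hcl : 1 ≤ ⌈y f⌉ := by omega
      have hygt : 0 < y f := by
        have := Int.lt_ceil.mp (show (0:ℤ) < ⌈y f⌉ by omega)
        simpa using this
      have hlampos : 0 < lamZ f := by
        by_contra hge
        push_neg at hge
        have : y f ≤ 0 := by
          rw [hyval]
          apply div_nonpos_of_nonpos_of_nonneg _ hk0.le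
          exact_mod_cast hge
        linarith
      rw [h]; nlinarith [hlampos]
  have hstrict : (γ e)^2 < lamZ e * γ e := by
    rcases abs_cases (lamZ e) with ⟨habs, hsgn⟩ | ⟨habs, hsgn⟩
    · -- lamZ e = k
      have hlz : lamZ e ≠ 0 := by
        have h9 := hk2
        rw [hkdef, habs] at h9
        omega
      have hye : y e = 1 := by
        rw [hyval, hkdef, habs]
        exact div_self (by exact_mod_cast hlz)
      have hγe : γ e = 1 := by
        obtain ⟨h1, h2⟩ := hγb e
        rw [hye] at h1 h2
        simp only [Int.floor_one, Int.ceil_one] at h1 h2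
        omega
      rw [hγe]
      have : lamZ e = k := by omega
      nlinarith
    · -- lamZ e = -k
      have hlz : lamZ e ≠ 0 := by omega
      have hye : y e = -1 := by
        rw [hyval, hkdef, show |lamZ e| = -lamZ e from habs]
        push_cast
        rw [div_neg, div_self (by exact_mod_cast hlz)]
      have hγe : γ e = -1 := by
        obtain ⟨h1, h2⟩ := hγb e
        rw [hye] at h1 h2
        rw [show (-1:ℝ) = ((-1:ℤ):ℝ) by norm_num, Int.floor_intCast] at h1
        rw [show (-1:ℝ) = ((-1:ℤ):ℝ) by norm_num, Int.ceil_intCast] at h2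
        omega
      rw [hγe]
      have : lamZ e = -k := by omega
      nlinarith
  set γR : E → ℝ := fun f => (γ f : ℝ) with hγRdef
  have hmem1 : latMem M γR := ⟨by rw [hMN]; exact hγker, fun f => ⟨γ f, rfl⟩⟩
  have hmem2 : latMem M (lam - γR) := by
    constructor
    · rw [Matrix.mulVec_sub, hlam.1, hMN, hγker, sub_zero]
    · intro f
      refine ⟨lamZ f - γ f, ?_⟩
      rw [Pi.sub_apply, hlamc f, hγRdef]
      push_cast
      ring
  have i1 := hxV0 γR hmem1
  have i2 := hxVlam (lam - γR) hmem2
  have e1 : ∑ f, (x f - γR f)^2 =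
      (∑ f, x f^2) - 2*(∑ f, x f * γR f) + (∑ f, γR f^2) := by
    rw [Finset.mul_sum, ← Finset.sum_sub_distrib, ← Finset.sum_add_distrib]
    apply Finset.sum_congr rfl
    intros
    ring
  have e2 : ∑ f, (x f - (lam - γR) f)^2 =
      (∑ f, (x f - lam f)^2) + 2*(∑ f, (x f - lam f) * γR f) + (∑ f, γR f^2) := by
    rw [Finset.mul_sum, ← Finset.sum_add_distrib, ← Finset.sum_add_distrib]
    apply Finset.sum_congr rfl
    intros f _
    rw [Pi.sub_apply]
    ring
  have e3 : ∑ f, (x f - lam f) * γR f = (∑ f, x f * γR f) - (∑ f, lam f * γR f) := by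
    rw [← Finset.sum_sub_distrib]
    apply Finset.sum_congr rfl
    intros
    ring
  have hlt : ∑ f, γR f^2 < ∑ f, lam f * γR f := by
    apply Finset.sum_lt_sum
    · intro f _
      rw [hlamc f, hγRdef]
      dsimp only
      exact_mod_cast hpt f
    · refine ⟨e, Finset.mem_univ e, ?_⟩
      rw [hlamc e, hγRdef]
      dsimp only
      exact_mod_cast hstrict
  rw [e1] at i1
  rw [e2, e3] at i2
  linarith
end

section
/- Let M be a totally unimodular matrix with columns indexed by E, Λ = ker(M) ∩ ℤ^E, and assume Tutte's consistent circuit decomposition: every λ ∈ Λ is a finite sum of circuits each contained in λ. Let λ, μ ∈ Λ be circuits (Eulerian flows supported on circuits of the column matroid) whose corresponding hyperplanes F_λ = {x : 2⟨x,λ⟩ = ‖λ‖²} and F_μ = {x : 2⟨x,μ⟩ = ‖μ‖²} both meet the Voronoi cell V_0 at a common point. Then λ and μ are consistent, i.e., λ_e·μ_e ≥ 0 for all e ∈ E. -/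
def Consistent {E : Type*} (x y : E → ℝ) : Prop := ∀ e, 0 ≤ x e * y e

def Contained {E : Type*} (μ lam : E → ℝ) : Prop :=
  ∃ γ : E → ℝ, lam = μ + γ ∧ Consistent μ lam ∧ Consistent γ lam

/-- A circuit in Λ: a nonzero Eulerian kernel vector whose support is a minimal
linearly dependent set of columns of M. -/
def IsCircuit {V E : Type*} [Fintype E] (M : Matrix V E ℝ) (γ : E → ℝ) : Prop :=
  M.mulVec γ = 0 ∧ (∀ e, γ e = -1 ∨ γ e = 0 ∨ γ e = 1) ∧ γ ≠ 0 ∧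
    ¬ LinearIndependent ℝ (fun e : {e : E // γ e ≠ 0} => fun v => M v e.1) ∧
    ∀ s : Set E, s ⊂ {e : E | γ e ≠ 0} →
      LinearIndependent ℝ (fun e : s => fun v => M v e.1)

section Stmt10Aux
open Finset
set_option linter.unusedSectionVars false
set_option maxHeartbeats 1000000
variable {V E : Type*} [Fintype V] [Fintype E]

lemma stmt10_sum_support (f : E → ℝ) (p : E → Prop) [DecidablePred p]
    (h : ∀ e, ¬ p e → f e = 0) :
    ∑ e : E, f e = ∑ e : {e : E // p e}, f e.1 := by
  classical
  rw [← Finset.sum_filter_of_ne (s := Finset.univ) (p := p) (f := f)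
    (fun e _ hf => by by_contra hp; exact hf (h e hp))]
  exact Finset.sum_subtype _ (by simp) f

lemma stmt10_not_li_of_kernel (M : Matrix V E ℝ) (γ : E → ℝ)
    (h0 : M.mulVec γ = 0) (hne : γ ≠ 0) :
    ¬ LinearIndependent ℝ (fun e : {e : E // γ e ≠ 0} => fun v => M v e.1) := by
  classical
  rw [Fintype.not_linearIndependent_iff]
  refine ⟨fun e => γ e.1, ?_, ?_⟩
  · funext v
    have h1 : (∑ e : {e : E // γ e ≠ 0}, γ e.1 • fun w => M w e.1) v
        = ∑ e : {e : E // γ e ≠ 0}, γ e.1 * M v e.1 := by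
      simp [Finset.sum_apply]
    have h2 : ∑ e : E, γ e * M v e = ∑ e : {e : E // γ e ≠ 0}, γ e.1 * M v e.1 :=
      stmt10_sum_support (fun e => γ e * M v e) (fun e => γ e ≠ 0)
        (fun e he => by simp only [not_not] at he; simp [he])
    have h4 : ∑ e : E, γ e * M v e = 0 := by
      have := congrFun h0 v
      simpa [Matrix.mulVec, dotProduct, mul_comm] using this
    simp only [h1, ← h2, h4, Pi.zero_apply]
  · obtain ⟨e, he⟩ := Function.ne_iff.mp hne
    exact ⟨⟨e, by simpa using he⟩, by simpa using he⟩

lemma stmt10_kernel_of_not_li (M : Matrix V E ℝ) (s : Set E)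
    (h : ¬ LinearIndependent ℝ (fun e : s => fun v => M v e.1)) :
    ∃ z : E → ℝ, z ≠ 0 ∧ M.mulVec z = 0 ∧ ∀ e, z e ≠ 0 → e ∈ s := by
  classical
  rw [Fintype.not_linearIndependent_iff] at h
  obtain ⟨g, hg, i, hi⟩ := h
  set z : E → ℝ := fun e => if h : e ∈ s then g ⟨e, h⟩ else 0 with hzdef
  refine ⟨z, ?_, ?_, ?_⟩
  · intro hz
    apply hi
    have := congrFun hz i.1
    simpa [hzdef, i.2] using this
  · funext v
    have h1 : (∑ e : s, g e • fun w => M w e.1) v = ∑ e : s, g e * M v e.1 := by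
      simp [Finset.sum_apply]
    have h2 : M.mulVec z v = ∑ e : E, M v e * z e := rfl
    have h3 : ∑ e : E, M v e * z e = ∑ e : s, M v e.1 * z e.1 :=
      stmt10_sum_support (fun e => M v e * z e) (· ∈ s)
        (fun e he => by simp [hzdef, he])
    have h5 : ∀ e : s, M v e.1 * z e.1 = g e * M v e.1 := by
      intro e
      simp [hzdef, e.2, mul_comm]
    have h6 := congrFun hg v
    simp only [Pi.zero_apply] at h6
    rw [h1] at h6
    rw [Pi.zero_apply, h2, h3]
    rw [Finset.sum_congr rfl (fun e _ => h5 e)]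
    exact h6
  · intro e he
    by_contra hes
    simp [hzdef, hes] at he


lemma stmt10_surgery_aux (M : Matrix V E ℝ) (y z : E → ℝ)
    (hy : M.mulVec y = 0) (hz : M.mulVec z = 0)
    (hsub : ∀ e, z e ≠ 0 → y e ≠ 0)
    (hpos : ∃ e, 0 < y e * z e) :
    ∃ y' : E → ℝ, M.mulVec y' = 0 ∧ (∀ e, y' e = 0 ∨ 0 < y' e * y e) ∧
      (∀ e, y e = 0 → y' e = 0) ∧ (∃ e, y e ≠ 0 ∧ y' e = 0) ∧
      (∀ e, z e = 0 → y' e = y e) := by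
  classical
  obtain ⟨e₁, he₁⟩ := hpos
  obtain ⟨e₀, he₀F, hmin⟩ := Finset.exists_min_image
    (Finset.univ.filter fun e => 0 < y e * z e) (fun e => y e / z e)
    ⟨e₁, by simpa using he₁⟩
  simp only [Finset.mem_filter, Finset.mem_univ, true_and] at he₀F
  set t : ℝ := y e₀ / z e₀ with ht
  have hz₀ : z e₀ ≠ 0 := by
    intro h; rw [h, mul_zero] at he₀F; exact lt_irrefl 0 he₀F
  have ht0 : 0 < t := by
    rcases mul_pos_iff.mp he₀F with ⟨h1, h2⟩ | ⟨h1, h2⟩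
    · exact div_pos h1 h2
    · exact div_pos_of_neg_of_neg h1 h2
  refine ⟨y - t • z, ?_, ?_, ?_, ?_, ?_⟩
  · rw [Matrix.mulVec_sub, Matrix.mulVec_smul, hy, hz, smul_zero, sub_zero]
  · intro e
    simp only [Pi.sub_apply, Pi.smul_apply, smul_eq_mul]
    by_cases hze : z e = 0
    · rcases eq_or_ne (y e) 0 with hye | hye
      · left; rw [hze, hye]; ring
      · right; rw [hze]; ring_nf; positivity
    · have hye : y e ≠ 0 := hsub e hze
      rcases (mul_ne_zero hye hze).lt_or_gt with hneg | hposs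
      · right
        have : 0 < -(y e * z e) := by linarith
        nlinarith [mul_pos ht0 this, mul_self_pos.mpr hye]
      · have hte : t ≤ y e / z e := hmin e (by simp [hposs])
        rcases eq_or_lt_of_le hte with heq | hlt
        · left
          have : y e = t * z e := by
            rw [eq_div_iff hze] at heq
            linarith [heq]
          rw [this]; ring
        · right
          have h1 : 0 < (y e / z e - t) := by linarith
          have : y e - t * z e = z e * (y e / z e - t) := by
            field_simp
          rw [this]
          nlinarith [mul_pos hposs h1]
  · intro e hye
    have hze : z e = 0 := by
      by_contra h; exact hsub e h hye
    simp [hye, hze]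
  · refine ⟨e₀, ?_, ?_⟩
    · intro h; rw [h, zero_mul] at he₀F; exact lt_irrefl 0 he₀F
    · simp only [Pi.sub_apply, Pi.smul_apply, smul_eq_mul, ht]
      field_simp
      ring
  · intro e hze
    simp [hze]

lemma stmt10_surgery (M : Matrix V E ℝ) (y z : E → ℝ)
    (hy : M.mulVec y = 0) (hz : M.mulVec z = 0) (hzne : z ≠ 0)
    (hsub : ∀ e, z e ≠ 0 → y e ≠ 0) :
    ∃ y' : E → ℝ, M.mulVec y' = 0 ∧ (∀ e, y' e = 0 ∨ 0 < y' e * y e) ∧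
      (∀ e, y e = 0 → y' e = 0) ∧ (∃ e, y e ≠ 0 ∧ y' e = 0) ∧
      (∀ e, z e = 0 → y' e = y e) := by
  by_cases hpos : ∃ e, 0 < y e * z e
  · exact stmt10_surgery_aux M y z hy hz hsub hpos
  · have hz' : M.mulVec (-z) = 0 := by rw [Matrix.mulVec_neg, hz, neg_zero]
    have hsub' : ∀ e, (-z) e ≠ 0 → y e ≠ 0 := by
      intro e he; exact hsub e (by simpa using he)
    have hpos' : ∃ e, 0 < y e * (-z) e := by
      push_neg at hpos
      obtain ⟨e, he⟩ := Function.ne_iff.mp hzne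
      simp only [Pi.zero_apply] at he
      have hye := hsub e he
      have := (mul_ne_zero hye he).lt_or_gt
      rcases this with h | h
      · exact ⟨e, by simp only [Pi.neg_apply]; linarith⟩
      · exact absurd h (not_lt.mpr (hpos e))
    obtain ⟨y', h1, h2, h3, h4, h5⟩ := stmt10_surgery_aux M y (-z) hy hz' hsub' hpos'
    exact ⟨y', h1, h2, h3, h4, fun e he => h5 e (by simp [he])⟩

lemma stmt10_exists_conformal_min (M : Matrix V E ℝ) (lam : E → ℝ)
    (hker : M.mulVec lam = 0) (hne : lam ≠ 0) :
    ∃ y : E → ℝ, M.mulVec y = 0 ∧ y ≠ 0 ∧ (∀ e, y e = 0 ∨ 0 < y e * lam e) ∧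
      ∀ s : Set E, s ⊂ {e : E | y e ≠ 0} →
        LinearIndependent ℝ (fun e : s => fun v => M v e.1) := by
  classical
  set P : ℕ → Prop := fun n => ∃ y : E → ℝ, M.mulVec y = 0 ∧ y ≠ 0 ∧
    (∀ e, y e = 0 ∨ 0 < y e * lam e) ∧
    (Finset.univ.filter fun e => y e ≠ 0).card = n with hP
  have hPex : ∃ n, P n := by
    refine ⟨_, lam, hker, hne, fun e => ?_, rfl⟩
    rcases eq_or_ne (lam e) 0 with h | h
    · exact Or.inl h
    · exact Or.inr (mul_self_pos.mpr h)
  obtain ⟨y, hy1, hy2, hy3, hy4⟩ := Nat.find_spec hPex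
  refine ⟨y, hy1, hy2, hy3, ?_⟩
  intro s hs
  by_contra hnli
  obtain ⟨z, hz1, hz2, hz3⟩ := stmt10_kernel_of_not_li M s hnli
  have hsub : ∀ e, z e ≠ 0 → y e ≠ 0 := fun e he => hs.1 (hz3 e he)
  obtain ⟨y', k1, k2, k3, k4, k5⟩ := stmt10_surgery M y z hy1 hz2 hz1 hsub
  obtain ⟨e₂, he₂s, he₂y⟩ := Set.exists_of_ssubset hs
  have hy'ne : y' ≠ 0 := by
    intro h
    have : y' e₂ = y e₂ := k5 e₂ (by
      by_contra hz; exact he₂y (hz3 e₂ hz))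
    rw [h] at this
    simp only [Pi.zero_apply] at this
    exact he₂s this.symm
  have hconf : ∀ e, y' e = 0 ∨ 0 < y' e * lam e := by
    intro e
    rcases k2 e with h | h
    · exact Or.inl h
    · right
      have hye : y e ≠ 0 := by
        intro h0; rw [h0, mul_zero] at h; exact lt_irrefl 0 h
      rcases hy3 e with h0 | h1
      · exact absurd h0 hye
      · nlinarith [mul_pos h h1, sq_nonneg (y e)]
  have hcard : (Finset.univ.filter fun e => y' e ≠ 0).card
      < (Finset.univ.filter fun e => y e ≠ 0).card := by
    apply Finset.card_lt_card
    rw [Finset.ssubset_iff_of_subset]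
    · obtain ⟨e₃, h₃y, h₃y'⟩ := k4
      exact ⟨e₃, by simpa using h₃y, by simpa using h₃y'⟩
    · intro e he
      simp only [Finset.mem_filter, Finset.mem_univ, true_and] at he ⊢
      intro h0
      exact he (k3 e h0)
  rw [hy4] at hcard
  exact Nat.find_min hPex hcard ⟨y', k1, hy'ne, hconf, rfl⟩

lemma stmt10_exists_rows (m : ℕ) {V : Type*} [Fintype V] (c : Fin m → V → ℝ)
    (hc : LinearIndependent ℝ c) :
    ∃ f : Fin m → V, (Matrix.of fun i j => c j (f i)).det ≠ 0 := by
  classical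
  set t : Set (Fin m → ℝ) := Set.range (fun v : V => fun j => c j v) with htdef
  have hspan : ⊤ ≤ Submodule.span ℝ t := by
    by_contra hlt
    have hlt' : Submodule.span ℝ t < ⊤ := lt_top_iff_ne_top.mpr
      (fun h' => hlt (h' ▸ le_rfl))
    obtain ⟨φ, hφne, hφbot⟩ :=
      Submodule.exists_dual_map_eq_bot_of_lt_top hlt' inferInstance
    have hφt : ∀ v : V, φ (fun j => c j v) = 0 := by
      intro v
      have hmem : φ (fun j => c j v) ∈ (Submodule.span ℝ t).map φ :=
        ⟨_, Submodule.subset_span ⟨v, rfl⟩, rfl⟩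
      rw [hφbot] at hmem
      simpa using hmem
    set a : Fin m → ℝ := fun j => φ (fun k => if j = k then 1 else 0) with hadef
    have hkey : ∀ w : Fin m → ℝ, φ w = ∑ j, w j * a j := by
      intro w
      rw [LinearMap.pi_apply_eq_sum_univ φ w]
      simp [hadef, smul_eq_mul]
    have hsum : ∑ j, a j • c j = 0 := by
      funext v
      rw [Finset.sum_apply]
      have := hφt v
      rw [hkey] at this
      simpa [mul_comm] using this
    have ha : ∀ j, a j = 0 := Fintype.linearIndependent_iff.mp hc a hsum
    apply hφne
    apply LinearMap.ext
    intro w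
    rw [hkey]
    simp [ha]
  have hli0 : LinearIndependent ℝ ((↑) : (∅ : Set (Fin m → ℝ)) → (Fin m → ℝ)) :=
    linearIndependent_empty ℝ _
  let b := Module.Basis.extendLe (s := ∅) hli0 (Set.empty_subset t) hspan
  haveI : Fintype (LinearIndepOn.extend (K := ℝ) (v := (id : (Fin m → ℝ) → (Fin m → ℝ))) (s := ∅) hli0 (Set.empty_subset t)) :=
    FiniteDimensional.fintypeBasisIndex b
  let eqv := b.indexEquiv (Pi.basisFun ℝ (Fin m))
  let b' : Module.Basis (Fin m) ℝ (Fin m → ℝ) := b.reindex eqv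
  have hb't : ∀ i, (b' i : Fin m → ℝ) ∈ t := by
    intro i
    have : b' i = b (eqv.symm i) := b.reindex_apply eqv i
    rw [this]
    have hmem : (b (eqv.symm i) : Fin m → ℝ) ∈ Set.range b := ⟨_, rfl⟩
    exact Module.Basis.extendLe_subset (s := ∅) hli0 (Set.empty_subset t) hspan hmem
  choose f hf using fun i => hb't i
  refine ⟨f, ?_⟩
  have hrows : ∀ i, (Matrix.of fun i j => c j (f i)) i = b' i := by
    intro i
    funext j
    have := congrFun (hf i) j
    simpa [Matrix.of_apply] using this
  have hLI : LinearIndependent ℝ (fun i => (Matrix.of fun i j => c j (f i)) i) := by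
    have : (fun i => (Matrix.of fun i j => c j (f i)) i) = fun i => b' i := by
      funext i; exact hrows i
    rw [this]
    exact b'.linearIndependent
  have := Matrix.linearIndependent_rows_iff_isUnit.mp hLI
  have hdet := Matrix.isUnit_iff_isUnit_det _ |>.mp this
  exact hdet.ne_zero

lemma stmt10_circuit_of_min (M : Matrix V E ℝ)
    (hTU : ∀ (k : ℕ) (f : Fin k → V) (g : Fin k → E),
      (M.submatrix f g).det = 1 ∨ (M.submatrix f g).det = 0 ∨ (M.submatrix f g).det = -1)
    (y : E → ℝ) (hker : M.mulVec y = 0) (hne : y ≠ 0)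
    (hmin : ∀ s : Set E, s ⊂ {e : E | y e ≠ 0} →
      LinearIndependent ℝ (fun e : s => fun v => M v e.1)) :
    ∃ δ : E → ℝ, IsCircuit M δ ∧ (∀ e, δ e = 0 ∨ 0 < δ e * y e) := by
  classical
  obtain ⟨e₀, he₀⟩ := Function.ne_iff.mp hne
  simp only [Pi.zero_apply] at he₀
  set r : ℝ := |y e₀| with hrdef
  have hr0 : 0 < r := abs_pos.mpr he₀
  set δ : E → ℝ := fun e => y e / r with hδdef
  have hδsupp : ∀ e, δ e = 0 ↔ y e = 0 := by
    intro e
    simp only [hδdef, div_eq_zero_iff]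
    constructor
    · rintro (h | h)
      · exact h
      · exact absurd h hr0.ne'
    · exact Or.inl
  have hδsmul : δ = r⁻¹ • y := by
    funext e; simp [hδdef, div_eq_inv_mul, smul_eq_mul]
  have hδker : M.mulVec δ = 0 := by
    rw [hδsmul, Matrix.mulVec_smul, hker, smul_zero]
  have hδe₀ : δ e₀ = 1 ∨ δ e₀ = -1 := by
    rcases lt_or_gt_of_ne he₀ with h | h
    · right
      simp only [hδdef, hrdef, abs_of_neg h]
      field_simp
    · left
      simp only [hδdef, hrdef, abs_of_pos h]
      field_simp
  have hδe₀ne : δ e₀ ≠ 0 := by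
    rcases hδe₀ with h | h <;> rw [h] <;> norm_num
  -- the support sets agree
  have hsuppeq : {e : E | δ e ≠ 0} = {e : E | y e ≠ 0} := by
    ext e; simp [hδsupp e]
  -- set up the submatrix machinery
  set T : Finset E := (Finset.univ.filter fun e => y e ≠ 0).erase e₀ with hTdef
  have he₀T : e₀ ∉ T := Finset.notMem_erase _ _
  have hTy : ∀ e ∈ T, y e ≠ 0 := by
    intro e he
    exact (Finset.mem_filter.mp (Finset.mem_of_mem_erase he)).2
  set m : ℕ := T.card with hmdef
  set eqvT : ↥T ≃ Fin m := Fintype.equivFinOfCardEq (Fintype.card_coe T) with heqvT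
  set gE : Fin m → E := fun i => ((eqvT.symm i : ↥T) : E) with hgE
  have hgE_mem : ∀ i, gE i ∈ T := fun i => (eqvT.symm i).2
  have hgE_inj : Function.Injective gE := by
    intro i j h
    have : (eqvT.symm i : ↥T) = (eqvT.symm j : ↥T) := Subtype.ext h
    exact eqvT.symm.injective this
  -- linear independence of the columns over T
  have hssub : {e : E | e ∈ T} ⊂ {e : E | y e ≠ 0} := by
    constructor
    · intro e he; exact hTy e he
    · intro hsub
      exact he₀T (hsub (by simpa using he₀))
  have hLIT := hmin _ hssub
  set c : Fin m → V → ℝ := fun i v => M v (gE i) with hc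
  have hcLI : LinearIndependent ℝ c := by
    have := hLIT.comp (fun i => (⟨gE i, hgE_mem i⟩ : {e : E | e ∈ T}))
      (fun i j h => hgE_inj (congrArg Subtype.val h))
    exact this
  obtain ⟨f, hfdet⟩ := stmt10_exists_rows m c hcLI
  have hA : (Matrix.of fun i j => c j (f i)) = M.submatrix f gE := rfl
  rw [hA] at hfdet
  set A : Matrix (Fin m) (Fin m) ℝ := M.submatrix f gE with hAdef
  have hdetA1 : A.det = 1 ∨ A.det = -1 := by
    rcases hTU m f gE with h | h | h
    · exact Or.inl h
    · exact absurd h hfdet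
    · exact Or.inr h
  set b : Fin m → ℝ := fun i => -(M (f i) e₀ * δ e₀) with hb
  -- δ restricted to T solves the system
  have hsolve : A.mulVec (fun j => δ (gE j)) = b := by
    funext i
    have h0 : ∑ e : E, M (f i) e * δ e = 0 := by
      have := congrFun hδker (f i)
      simpa [Matrix.mulVec, dotProduct] using this
    have h1 : ∑ e : E, M (f i) e * δ e = ∑ e ∈ insert e₀ T, M (f i) e * δ e := by
      symm
      apply Finset.sum_subset (Finset.subset_univ _)
      intro e _ hnot
      have hy0 : y e = 0 := by
        by_contra hy
        apply hnot
        rcases eq_or_ne e e₀ with h | h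
        · rw [h]; exact Finset.mem_insert_self _ _
        · exact Finset.mem_insert_of_mem (Finset.mem_erase.mpr ⟨h, by simp [hy]⟩)
      rw [(hδsupp e).mpr hy0, mul_zero]
    have h2 : ∑ e ∈ insert e₀ T, M (f i) e * δ e
        = M (f i) e₀ * δ e₀ + ∑ e ∈ T, M (f i) e * δ e :=
      Finset.sum_insert he₀T
    have h3 : ∑ e ∈ T, M (f i) e * δ e = ∑ j : Fin m, M (f i) (gE j) * δ (gE j) := by
      rw [← Finset.sum_coe_sort T (fun e => M (f i) e * δ e)]
      exact (Equiv.sum_comp eqvT.symm (fun x : ↥T => M (f i) (x : E) * δ (x : E))).symm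
    have h4 : A.mulVec (fun j => δ (gE j)) i = ∑ j : Fin m, M (f i) (gE j) * δ (gE j) := by
      simp [Matrix.mulVec, dotProduct, hAdef, Matrix.submatrix_apply]
    rw [h4]
    show _ = -(M (f i) e₀ * δ e₀)
    have := h0
    rw [h1, h2, h3] at this
    linarith
  have hdetAne : A.det ≠ 0 := hfdet
  have hinj : Function.Injective A.mulVec :=
    Matrix.mulVec_injective_iff_isUnit.mpr ((Matrix.isUnit_iff_isUnit_det A).mpr
      (isUnit_iff_ne_zero.mpr hdetAne))
  have hcram : A.mulVec ((A.det)⁻¹ • Matrix.cramer A b) = b := by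
    rw [Matrix.mulVec_smul, Matrix.mulVec_cramer, smul_smul, inv_mul_cancel₀ hdetAne, one_smul]
  have hδgE : ∀ j, δ (gE j) = (A.det)⁻¹ * Matrix.cramer A b j := by
    have := hinj (hsolve.trans hcram.symm)
    intro j
    have := congrFun this j
    simpa using this
  have hcramval : ∀ j, Matrix.cramer A b j
      = (-δ e₀) * (M.submatrix f (Function.update gE j e₀)).det := by
    intro j
    rw [Matrix.cramer_apply]
    have hbs : b = (-δ e₀) • (fun i => M (f i) e₀) := by
      funext i; simp [hb]; ring
    rw [hbs, Matrix.det_updateCol_smul]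
    have hmat : A.updateCol j (fun i => M (f i) e₀)
        = M.submatrix f (Function.update gE j e₀) := by
      ext i k
      rw [Matrix.updateCol_apply]
      by_cases hkj : k = j
      · simp [hkj, Function.update_apply]
      · simp [hkj, Function.update_apply, hAdef]
    rw [hmat]
  have hδval : ∀ j, δ (gE j) = -1 ∨ δ (gE j) = 0 ∨ δ (gE j) = 1 := by
    intro j
    rcases hdetA1 with h | h <;> rcases hδe₀ with h2 | h2 <;>
      rcases hTU m f (Function.update gE j e₀) with h3 | h3 | h3 <;>
      rw [hδgE j, hcramval j, h, h2, h3] <;> norm_num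
  have hentries : ∀ e, δ e = -1 ∨ δ e = 0 ∨ δ e = 1 := by
    intro e
    by_cases hy0 : y e = 0
    · exact Or.inr (Or.inl ((hδsupp e).mpr hy0))
    · by_cases he : e = e₀
      · subst he
        rcases hδe₀ with h | h
        · exact Or.inr (Or.inr h)
        · exact Or.inl h
      · have heT : e ∈ T := Finset.mem_erase.mpr ⟨he, by simp [hy0]⟩
        have : gE (eqvT ⟨e, heT⟩) = e := by simp [hgE]
        rw [← this]
        exact hδval _
  have hδne : δ ≠ 0 := by
    intro h
    exact hδe₀ne (by rw [h]; rfl)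
  refine ⟨δ, ⟨hδker, hentries, hδne, ?_, ?_⟩, ?_⟩
  · exact stmt10_not_li_of_kernel M δ hδker hδne
  · intro s hs
    rw [hsuppeq] at hs
    exact hmin s hs
  · intro e
    by_cases hy0 : y e = 0
    · exact Or.inl ((hδsupp e).mpr hy0)
    · right
      have : δ e * y e = y e * y e / r := by
        rw [hδdef]; ring
      rw [this]
      exact div_pos (mul_self_pos.mpr hy0) hr0

lemma stmt10_conformal_circuit (M : Matrix V E ℝ)
    (hTU : ∀ (k : ℕ) (f : Fin k → V) (g : Fin k → E),
      (M.submatrix f g).det = 1 ∨ (M.submatrix f g).det = 0 ∨ (M.submatrix f g).det = -1)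
    (lam : E → ℝ) (hker : M.mulVec lam = 0) (hne : lam ≠ 0) :
    ∃ δ : E → ℝ, IsCircuit M δ ∧ (∀ e, δ e = 0 ∨ 0 < δ e * lam e) := by
  obtain ⟨y, hy1, hy2, hy3, hy4⟩ := stmt10_exists_conformal_min M lam hker hne
  obtain ⟨δ, hcirc, hconf⟩ := stmt10_circuit_of_min M hTU y hy1 hy2 hy4
  refine ⟨δ, hcirc, fun e => ?_⟩
  rcases hconf e with h | h
  · exact Or.inl h
  · right
    have hye : y e ≠ 0 := by
      intro h0; rw [h0, mul_zero] at h; exact lt_irrefl 0 h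
    rcases hy3 e with h0 | h1
    · exact absurd h0 hye
    · nlinarith [mul_pos h h1, sq_nonneg (y e)]

lemma stmt10_key_ineq (M : Matrix V E ℝ)
    (hTU : ∀ (k : ℕ) (f : Fin k → V) (g : Fin k → E),
      (M.submatrix f g).det = 1 ∨ (M.submatrix f g).det = 0 ∨ (M.submatrix f g).det = -1)
    (x : E → ℝ)
    (hxV0 : ∀ ν : E → ℝ, latMem M ν → ∑ e, (x e) ^ 2 ≤ ∑ e, (x e - ν e) ^ 2) :
    ∀ N : ℕ, ∀ (ν : E → ℝ) (n : E → ℤ), M.mulVec ν = 0 → (∀ e, ν e = n e) →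
      (∑ e, (n e).natAbs) ≤ N → 2 * ∑ e, x e * ν e ≤ ∑ e, |ν e| := by
  classical
  intro N
  induction N with
  | zero =>
    intro ν n hker hint hN
    have hν : ∀ e, ν e = 0 := by
      intro e
      have h0 : (n e).natAbs = 0 :=
        Finset.sum_eq_zero_iff.mp (Nat.le_zero.mp hN) e (Finset.mem_univ e)
      have : n e = 0 := Int.natAbs_eq_zero.mp h0
      rw [hint e, this, Int.cast_zero]
    simp [hν]
  | succ N ih =>
    intro ν n hker hint hN
    by_cases hν : ν = 0
    · simp [hν, abs_nonneg, Finset.sum_nonneg (fun e _ => abs_nonneg (ν e))]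
    obtain ⟨δ, hcirc, hconf⟩ := stmt10_conformal_circuit M hTU ν hker hν
    obtain ⟨hδker, hδent, hδne, -, -⟩ := hcirc
    have hδint : ∀ e, ∃ k : ℤ, δ e = k := by
      intro e
      rcases hδent e with h | h | h
      · exact ⟨-1, by rw [h]; norm_num⟩
      · exact ⟨0, by rw [h]; norm_num⟩
      · exact ⟨1, by rw [h]; norm_num⟩
    have hxδ : 2 * ∑ e, x e * δ e ≤ ∑ e, |δ e| := by
      have h1 := hxV0 δ ⟨hδker, hδint⟩
      have h2 : ∑ e, (x e - δ e) ^ 2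
          = ∑ e, (x e) ^ 2 - 2 * ∑ e, x e * δ e + ∑ e, (δ e) ^ 2 := by
        have h2a : ∑ e, (x e - δ e) ^ 2
            = ∑ e, ((x e) ^ 2 - 2 * (x e * δ e) + (δ e) ^ 2) :=
          Finset.sum_congr rfl fun e _ => by ring
        rw [h2a, Finset.sum_add_distrib, Finset.sum_sub_distrib, ← Finset.mul_sum]
      have h3 : ∑ e, (δ e) ^ 2 = ∑ e, |δ e| := by
        refine Finset.sum_congr rfl fun e _ => ?_
        rcases hδent e with h | h | h <;> rw [h] <;> norm_num
      linarith
    -- sign facts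
    have hsign : ∀ e, δ e ≠ 0 → (δ e = 1 ∧ 1 ≤ n e) ∨ (δ e = -1 ∧ n e ≤ -1) := by
      intro e he
      have hpos : 0 < δ e * ν e := by
        rcases hconf e with h | h
        · exact absurd h he
        · exact h
      rcases hδent e with h | h | h
      · right
        refine ⟨h, ?_⟩
        rw [h] at hpos
        have hlt : ν e < 0 := by nlinarith
        rw [hint e] at hlt
        have : n e < 0 := by exact_mod_cast hlt
        omega
      · exact absurd h he
      · left
        refine ⟨h, ?_⟩
        rw [h, one_mul] at hpos
        rw [hint e] at hpos
        have : 0 < n e := by exact_mod_cast hpos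
        omega
    set d : E → ℤ := fun e => if δ e = 1 then 1 else if δ e = -1 then -1 else 0 with hd
    have hdval : ∀ e, δ e = d e := by
      intro e
      rcases hδent e with h | h | h <;> simp only [hd, h] <;> norm_num
    set ν' : E → ℝ := ν - δ with hν'
    set n' : E → ℤ := fun e => n e - d e with hn'
    have hint' : ∀ e, ν' e = n' e := by
      intro e
      simp only [hν', hn', Pi.sub_apply, Int.cast_sub]
      rw [hint e, hdval e]
    have hker' : M.mulVec ν' = 0 := by
      rw [hν', Matrix.mulVec_sub, hker, hδker, sub_zero]
    have hdabs : ∀ e, (n' e).natAbs ≤ (n e).natAbs := by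
      intro e
      by_cases he : δ e = 0
      · have : d e = 0 := by
          simp only [hd]
          rw [if_neg (by rw [he]; norm_num), if_neg (by rw [he]; norm_num)]
        simp [hn', this]
      · rcases hsign e he with ⟨h1, h2⟩ | ⟨h1, h2⟩
        · have : d e = 1 := by simp only [hd, h1]; norm_num
          simp only [hn', this]
          omega
        · have : d e = -1 := by simp only [hd, h1]; norm_num
          simp only [hn', this]
          omega
    have hdec : ∑ e, (n' e).natAbs < ∑ e, (n e).natAbs := by
      obtain ⟨e₁, he₁⟩ := Function.ne_iff.mp hδne
      simp only [Pi.zero_apply] at he₁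
      refine Finset.sum_lt_sum (fun e _ => hdabs e) ⟨e₁, Finset.mem_univ e₁, ?_⟩
      rcases hsign e₁ he₁ with ⟨h1, h2⟩ | ⟨h1, h2⟩
      · have : d e₁ = 1 := by simp only [hd, h1]; norm_num
        simp only [hn', this]
        omega
      · have : d e₁ = -1 := by simp only [hd, h1]; norm_num
        simp only [hn', this]
        omega
    have hN' : ∑ e, (n' e).natAbs ≤ N := by omega
    have hIH := ih ν' n' hker' hint' hN'
    have habs : ∀ e, |ν' e| = |ν e| - |δ e| := by
      intro e
      by_cases he : δ e = 0
      · simp [hν', he]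
      · rcases hsign e he with ⟨h1, h2⟩ | ⟨h1, h2⟩
        · have hνe : (1:ℝ) ≤ ν e := by
            rw [hint e]; exact_mod_cast h2
          simp only [hν', Pi.sub_apply, h1]
          rw [abs_of_nonneg (by linarith), abs_of_nonneg (by linarith), abs_one]
        · have hνe : ν e ≤ -1 := by
            rw [hint e]; exact_mod_cast h2
          simp only [hν', Pi.sub_apply, h1]
          rw [abs_of_nonpos (by linarith : ν e - -1 ≤ 0), abs_of_nonpos (by linarith : ν e ≤ 0),
            show |(-1:ℝ)| = 1 by norm_num]
          ring
    have hsplit : 2 * ∑ e, x e * ν e = 2 * ∑ e, x e * δ e + 2 * ∑ e, x e * ν' e := by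
      rw [← mul_add, ← Finset.sum_add_distrib]
      congr 1
      refine Finset.sum_congr rfl fun e _ => ?_
      simp only [hν', Pi.sub_apply]
      ring
    have habs_sum : ∑ e, |ν' e| = ∑ e, |ν e| - ∑ e, |δ e| := by
      rw [← Finset.sum_sub_distrib]
      exact Finset.sum_congr rfl fun e _ => habs e
    rw [habs_sum] at hIH
    linarith

end Stmt10Aux

/-- Assume every integer flow admits a consistent circuit
decomposition. If λ, μ ∈ Λ are circuits whose hyperplanes
F_λ = {x : 2⟨x,λ⟩ = ‖λ‖²} and F_μ both meet the Voronoi cell V_0 at a common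
point x, then λ and μ are consistent. -/
theorem stmt_10 {V E : Type*} [Fintype V] [Fintype E]
    (M : Matrix V E ℝ)
    (hTU : ∀ (k : ℕ) (f : Fin k → V) (g : Fin k → E),
      (M.submatrix f g).det = 1 ∨ (M.submatrix f g).det = 0 ∨ (M.submatrix f g).det = -1)
    (hTutte : ∀ lam : E → ℝ, latMem M lam → ∃ (n : ℕ) (γ : Fin n → (E → ℝ)),
      lam = ∑ i, γ i ∧ ∀ i, IsCircuit M (γ i) ∧ Contained (γ i) lam)
    (lam μ : E → ℝ) (hlam : latMem M lam) (hμ : latMem M μ)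
    (hclam : IsCircuit M lam) (hcμ : IsCircuit M μ)
    (x : E → ℝ) (hxker : M.mulVec x = 0)
    (hxV0 : ∀ ν : E → ℝ, latMem M ν → ∑ e, (x e) ^ 2 ≤ ∑ e, (x e - ν e) ^ 2)
    (hxFlam : 2 * ∑ e, x e * lam e = ∑ e, (lam e) ^ 2)
    (hxFμ : 2 * ∑ e, x e * μ e = ∑ e, (μ e) ^ 2) :
    Consistent lam μ := by
  classical
  set ν : E → ℝ := lam + μ with hν
  set n : E → ℤ := fun e => Classical.choose (hlam.2 e) + Classical.choose (hμ.2 e) with hn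
  have hint : ∀ e, ν e = n e := by
    intro e
    simp only [hν, hn, Pi.add_apply, Int.cast_add]
    have h1 := Classical.choose_spec (hlam.2 e)
    have h2 := Classical.choose_spec (hμ.2 e)
    rw [← h1, ← h2]
  have hνker : M.mulVec ν = 0 := by
    rw [hν, Matrix.mulVec_add, hlam.1, hμ.1, add_zero]
  have key := stmt10_key_ineq M hTU x hxV0 (∑ e, (n e).natAbs) ν n hνker hint le_rfl
  have h2xν : 2 * ∑ e, x e * ν e = ∑ e, (lam e) ^ 2 + ∑ e, (μ e) ^ 2 := by
    have : ∑ e, x e * ν e = ∑ e, x e * lam e + ∑ e, x e * μ e := by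
      rw [← Finset.sum_add_distrib]
      refine Finset.sum_congr rfl fun e _ => ?_
      simp only [hν, Pi.add_apply]; ring
    rw [this]; ring_nf; rw [← hxFlam, ← hxFμ]; ring
  have hAl : ∑ e, (lam e) ^ 2 = ∑ e, |lam e| := by
    refine Finset.sum_congr rfl fun e _ => ?_
    rcases hclam.2.1 e with h | h | h <;> rw [h] <;> norm_num
  have hAμ : ∑ e, (μ e) ^ 2 = ∑ e, |μ e| := by
    refine Finset.sum_congr rfl fun e _ => ?_
    rcases hcμ.2.1 e with h | h | h <;> rw [h] <;> norm_num
  have hchain : ∑ e, |lam e| + ∑ e, |μ e| ≤ ∑ e, |lam e + μ e| := by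
    have : ∑ e, |ν e| = ∑ e, |lam e + μ e| := rfl
    rw [← this, ← hAl, ← hAμ, ← h2xν]
    exact key
  have hterm : ∀ e, 0 ≤ |lam e| + |μ e| - |lam e + μ e| :=
    fun e => by linarith [abs_add_le (lam e) (μ e)]
  have hzero : ∑ e, (|lam e| + |μ e| - |lam e + μ e|) = 0 := by
    have hle : ∑ e, (|lam e| + |μ e| - |lam e + μ e|) ≤ 0 := by
      rw [Finset.sum_sub_distrib, Finset.sum_add_distrib]
      linarith
    exact le_antisymm hle (Finset.sum_nonneg fun e _ => hterm e)
  intro e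
  have heq : |lam e| + |μ e| - |lam e + μ e| = 0 :=
    (Finset.sum_eq_zero_iff_of_nonneg (fun e _ => hterm e)).mp hzero e (Finset.mem_univ e)
  have habs : |lam e + μ e| = |lam e| + |μ e| := by linarith
  have e1 : (lam e + μ e) ^ 2 = (|lam e| + |μ e|) ^ 2 := by
    rw [← sq_abs (lam e + μ e), habs]
  have e2 : lam e * μ e = |lam e| * |μ e| := by
    nlinarith [sq_abs (lam e), sq_abs (μ e)]
  rw [e2]
  positivity
end

section
/- Let M be a totally unimodular matrix with columns indexed by E and let λ ∈ ker(M) be nonzero. Let M_λ be the submatrix of M consisting of the columns indexed by supp(λ). Then ker(M_λ) has a basis consisting of circuits each consistent with λ (i.e., Eulerian kernel vectors γ supported on circuits with λ_e·γ_e ≥ 0 for all e). -/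
open Matrix

section Aux

variable {V E : Type*} [Fintype V] [Fintype E]

open Classical in
noncomputable def suppF (x : E → ℝ) : Finset E :=
  Finset.univ.filter (fun e => x e ≠ 0)

lemma mem_suppF {x : E → ℝ} {e : E} : e ∈ suppF x ↔ x e ≠ 0 := by
  classical simp [suppF]

lemma exists_rows_det_ne_zero {n : ℕ} (N : Matrix V (Fin n) ℝ)
    (h : LinearIndependent ℝ (fun j : Fin n => fun v : V => N v j)) :
    ∃ r : Fin n → V, (N.submatrix r id).det ≠ 0 := by
  classical
  have hcols : LinearIndependent ℝ Nᵀ := h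
  have hrank : N.rank = n := by
    rw [Matrix.rank_eq_finrank_span_cols]
    exact (finrank_span_eq_card hcols).trans (Fintype.card_fin n)
  have hrows : Module.finrank ℝ (Submodule.span ℝ (Set.range N)) = n := by
    have h1 := Matrix.rank_transpose N
    rw [Matrix.rank_eq_finrank_span_cols Nᵀ, show Nᵀ.col = N from rfl] at h1
    rw [h1, hrank]
  have htop : Submodule.span ℝ (Set.range N) = ⊤ :=
    Submodule.eq_top_of_finrank_eq (by rw [hrows, Module.finrank_fin_fun])
  obtain ⟨b, hbsub, hbspan, hbind⟩ := exists_linearIndependent ℝ (Set.range N)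
  rw [htop] at hbspan
  have hbfin : b.Finite := hbind.setFinite
  haveI : Fintype b := hbfin.fintype
  let B : Module.Basis b ℝ (Fin n → ℝ) := Module.Basis.mk hbind (by rw [Subtype.range_coe, hbspan])
  have hcard : Fintype.card b = n := by
    have := Module.finrank_eq_card_basis B
    rw [Module.finrank_fin_fun] at this
    omega
  let e : b ≃ Fin n := Fintype.equivFinOfCardEq hcard
  choose r hr using fun i : Fin n => hbsub (e.symm i).2
  refine ⟨r, ?_⟩
  have hli : LinearIndependent ℝ (fun i : Fin n => (N.submatrix r id) i) := by
    have : (fun i : Fin n => (N.submatrix r id) i) = (fun x : b => (x : Fin n → ℝ)) ∘ e.symm := by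
      funext i
      simp only [Function.comp]
      ext j
      have := hr i
      simp [Matrix.submatrix_apply, ← this]
    rw [this]
    exact hbind.comp e.symm e.symm.injective
  have := Matrix.linearIndependent_rows_iff_isUnit.mp hli
  have hdet : IsUnit (N.submatrix r id).det := (Matrix.isUnit_iff_isUnit_det _).mp this
  exact hdet.ne_zero

lemma abs_eq_abs_of_minimal (M : Matrix V E ℝ)
    (hTU : ∀ (k : ℕ) (f : Fin k → V) (g : Fin k → E),
      (M.submatrix f g).det = 1 ∨ (M.submatrix f g).det = 0 ∨ (M.submatrix f g).det = -1)
    (y : E → ℝ) (hk : M.mulVec y = 0)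
    (hmin : ∀ s : Set E, s ⊂ {e : E | y e ≠ 0} →
      LinearIndependent ℝ (fun e : s => fun v => M v e.1))
    {e f : E} (he : y e ≠ 0) (hf : y f ≠ 0) : |y f| = |y e| := by
  classical
  rcases eq_or_ne f e with rfl | hfe
  · rfl
  set S : Finset E := Finset.univ.filter (fun g => y g ≠ 0) with hS
  set T : Finset E := S.erase e with hT
  have hfT : f ∈ T := by simp [hT, hS, hfe, hf]
  have hsub : (↑T : Set E) ⊂ {e : E | y e ≠ 0} := by
    constructor
    · intro g hg
      simp only [hT, hS, Finset.coe_erase, Set.mem_diff, Finset.coe_filter] at hg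
      exact hg.1.2
    · intro hcon
      have : e ∈ (↑T : Set E) := hcon (by simp [he])
      simp [hT] at this
  have hind := hmin _ hsub
  set n : ℕ := T.card with hn
  let eq : { x // x ∈ T } ≃ Fin n := T.equivFin
  let b : Fin n → E := fun i => (eq.symm i : E)
  have hbinj : Function.Injective b := by
    intro i j hij
    exact eq.symm.injective (Subtype.ext hij)
  have hbT : ∀ i, b i ∈ T := fun i => (eq.symm i).2
  have hNind : LinearIndependent ℝ (fun j : Fin n => fun v : V => (M.submatrix id b) v j) := by
    have heq : (fun j : Fin n => fun v : V => M v (b j)) =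
        (fun x : (↑T : Set E) => fun v => M v x.1) ∘
          (fun i : Fin n => (⟨b i, by simpa using hbT i⟩ : (↑T : Set E))) := rfl
    exact heq ▸ hind.comp _ (fun i j hij => hbinj (congrArg Subtype.val hij))
  obtain ⟨r, hdet⟩ := exists_rows_det_ne_zero (M.submatrix id b) hNind
  set A : Matrix (Fin n) (Fin n) ℝ := M.submatrix r b with hA
  have hAeq : (M.submatrix id b).submatrix r id = A := by ext i j; simp [hA]
  rw [hAeq] at hdet
  have hrel : ∀ v : V, ∑ g ∈ T, M v g * y g = - (M v e * y e) := by
    intro v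
    have h0 : ∑ g : E, M v g * y g = 0 := by
      have := congrFun hk v
      simpa [Matrix.mulVec, dotProduct] using this
    have hsplit : ∑ g : E, M v g * y g = ∑ g ∈ S, M v g * y g := by
      refine (Finset.sum_subset (Finset.subset_univ S) ?_).symm
      intro g _ hgS
      have hyg : y g = 0 := by by_contra hgy; exact hgS (by simp [hS, hgy])
      rw [hyg, mul_zero]
    have heS : e ∈ S := by simp [hS, he]
    have hins : ∑ g ∈ S, M v g * y g = M v e * y e + ∑ g ∈ T, M v g * y g := by
      rw [hT, ← Finset.add_sum_erase _ _ heS]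
    rw [hsplit, hins] at h0
    linarith
  set u : Fin n → ℝ := fun j => -(y (b j)) / y e with hu
  set w : Fin n → ℝ := fun i => M (r i) e with hw
  have hkey : A.mulVec u = w := by
    funext i
    simp only [Matrix.mulVec, dotProduct, hA, Matrix.submatrix_apply]
    have hsum : ∑ j : Fin n, M (r i) (b j) * y (b j) = ∑ g ∈ T, M (r i) g * y g := by
      rw [Equiv.sum_comp eq.symm (fun x : {x // x ∈ T} => M (r i) x.1 * y x.1)]
      exact Finset.sum_coe_sort T (fun g => M (r i) g * y g)
    have hterm : ∀ j, M (r i) (b j) * u j = (M (r i) (b j) * y (b j)) * (-1 / y e) := by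
      intro j; simp only [hu]; ring
    rw [Finset.sum_congr rfl (fun j _ => hterm j), ← Finset.sum_mul, hsum, hrel (r i)]
    field_simp [hw]
    rw [hw]
  have hdetU : IsUnit A.det := isUnit_iff_ne_zero.mpr hdet
  have hinj : Function.Injective A.mulVec :=
    Matrix.mulVec_injective_iff_isUnit.mpr ((Matrix.isUnit_iff_isUnit_det A).mpr hdetU)
  have hcram : A.det • u = Matrix.cramer A w := by
    apply hinj
    rw [Matrix.mulVec_smul, hkey, Matrix.mulVec_cramer]
  set j0 : Fin n := eq ⟨f, hfT⟩ with hj0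
  have hbj0 : b j0 = f := by simp [b, hj0]
  have h1 : A.det * u j0 = (A.updateCol j0 w).det := by
    have := congrFun hcram j0
    simpa [Matrix.cramer_apply] using this
  have h2 : A.updateCol j0 w = M.submatrix r (Function.update b j0 e) := by
    ext i k
    by_cases hkj : k = j0 <;>
      simp [Matrix.updateCol_apply, Function.update, hkj, hA, hw]
  have huj0 : u j0 = -(y f) / y e := by simp [hu, hbj0]
  have huj0ne : u j0 ≠ 0 := by
    rw [huj0]
    exact div_ne_zero (neg_ne_zero.mpr hf) he
  have hAdet : |A.det| = 1 := by
    have h3 := hTU n r b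
    rw [← hA] at h3
    rcases h3 with h3 | h3 | h3 <;> simp [h3] at hdet ⊢
  have hD := hTU n r (Function.update b j0 e)
  rw [← h2] at hD
  have hDne : (A.updateCol j0 w).det ≠ 0 := by
    intro h0
    rw [h0] at h1
    exact huj0ne (by
      have := mul_eq_zero.mp h1
      tauto)
  have hDabs : |(A.updateCol j0 w).det| = 1 := by
    rcases hD with h3 | h3 | h3 <;> simp [h3] at hDne ⊢
  have habs : |A.det| * |u j0| = 1 := by
    rw [← abs_mul, h1, hDabs]
  rw [hAdet, one_mul, huj0, abs_div, abs_neg] at habs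
  have hye : |y e| ≠ 0 := abs_ne_zero.mpr he
  field_simp at habs
  exact habs

/-- From a linear dependence of columns over `s`, produce a kernel vector supported in `s`. -/
lemma kernel_vec_of_not_li (M : Matrix V E ℝ) (s : Set E)
    (h : ¬ LinearIndependent ℝ (fun e : s => fun v => M v e.1)) :
    ∃ z : E → ℝ, M.mulVec z = 0 ∧ z ≠ 0 ∧ ∀ e, z e ≠ 0 → e ∈ s := by
  classical
  haveI : Fintype ↥s := (Set.toFinite s).fintype
  obtain ⟨g, hg0, i0, hi0⟩ := Fintype.not_linearIndependent_iff.mp h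
  refine ⟨fun e => if h : e ∈ s then g ⟨e, h⟩ else 0, ?_, ?_, ?_⟩
  · funext v
    have h1 := congrFun hg0 v
    simp only [Finset.sum_apply, Pi.smul_apply, smul_eq_mul, Pi.zero_apply] at h1
    simp only [Matrix.mulVec, dotProduct, Pi.zero_apply]
    have h2 : ∑ e : E, M v e * (if h : e ∈ s then g ⟨e, h⟩ else 0)
        = ∑ e ∈ s.toFinset, M v e * (if h : e ∈ s then g ⟨e, h⟩ else 0) := by
      refine (Finset.sum_subset (Finset.subset_univ _) ?_).symm
      intro e _ hes
      rw [Set.mem_toFinset] at hes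
      simp [hes]
    rw [h2, Finset.sum_subtype s.toFinset (fun x => Set.mem_toFinset)
      (fun e => M v e * (if h : e ∈ s then g ⟨e, h⟩ else 0))]
    rw [← h1]
    refine Finset.sum_congr rfl ?_
    intro i _
    simp [i.2, mul_comm]
  · intro hz
    have := congrFun hz i0.1
    simp [i0.2] at this
    exact hi0 (by simpa using this)
  · intro e he
    by_contra hes
    simp [hes] at he

/-- A nonzero kernel vector witnesses linear dependence of the columns on its support. -/
lemma not_li_of_kernel (M : Matrix V E ℝ) (y : E → ℝ) (hk : M.mulVec y = 0) (hy : y ≠ 0) :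
    ¬ LinearIndependent ℝ (fun e : {e : E // y e ≠ 0} => fun v => M v e.1) := by
  classical
  rw [Fintype.not_linearIndependent_iff]
  refine ⟨fun i => y i.1, ?_, ?_⟩
  · funext v
    simp only [Finset.sum_apply, Pi.smul_apply, smul_eq_mul, Pi.zero_apply]
    have h0 : ∑ e : E, M v e * y e = 0 := by
      have := congrFun hk v
      simpa [Matrix.mulVec, dotProduct] using this
    have h2 : ∑ e : E, M v e * y e = ∑ e ∈ Finset.univ.filter (fun e => y e ≠ 0), M v e * y e := by
      refine (Finset.sum_subset (Finset.subset_univ _) ?_).symm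
      intro e _ hes
      simp only [Finset.mem_filter, Finset.mem_univ, true_and, not_not] at hes
      rw [hes, mul_zero]
    rw [h2, Finset.sum_subtype (p := fun e => y e ≠ 0) (Finset.univ.filter (fun e => y e ≠ 0))
      (fun x => by simp) (fun e => M v e * y e)] at h0
    calc ∑ x : { e : E // y e ≠ 0 }, y x.1 * M v x.1
        = ∑ x : { e : E // y e ≠ 0 }, M v x.1 * y x.1 :=
          Finset.sum_congr rfl (fun i _ => mul_comm _ _)
      _ = 0 := h0
  · obtain ⟨e, he⟩ := Function.ne_iff.mp hy
    exact ⟨⟨e, by simpa using he⟩, by simpa using he⟩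

/-- From a conformal support-minimal kernel vector, build a conformal circuit (by scaling). -/
lemma circuit_of_conformal_minimal (M : Matrix V E ℝ)
    (hTU : ∀ (k : ℕ) (f : Fin k → V) (g : Fin k → E),
      (M.submatrix f g).det = 1 ∨ (M.submatrix f g).det = 0 ∨ (M.submatrix f g).det = -1)
    (x y : E → ℝ) (hk : M.mulVec y = 0) (hy0 : y ≠ 0)
    (hminli : ∀ s : Set E, s ⊂ {e : E | y e ≠ 0} →
      LinearIndependent ℝ (fun e : s => fun v => M v e.1))
    (hconf : ∀ e, y e ≠ 0 → 0 < x e * y e) :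
    ∃ γ : E → ℝ, IsCircuit M γ ∧ (∀ e, γ e ≠ 0 → 0 < x e * γ e) ∧ ∀ e, x e = 0 → γ e = 0 := by
  obtain ⟨e1, he1'⟩ := Function.ne_iff.mp hy0
  have he1 : y e1 ≠ 0 := by simpa using he1'
  have hc : (0:ℝ) < |y e1| := abs_pos.mpr he1
  set γ : E → ℝ := fun e => y e / |y e1| with hγ
  have hγs : γ = |y e1|⁻¹ • y := by funext e; simp [hγ, div_eq_inv_mul]
  have hsupp : ∀ e, γ e ≠ 0 ↔ y e ≠ 0 := by
    intro e
    simp only [hγ, div_ne_zero_iff]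
    exact ⟨fun h => h.1, fun h => ⟨h, ne_of_gt hc⟩⟩
  have hsuppset : {e : E | γ e ≠ 0} = {e : E | y e ≠ 0} := Set.ext fun e => hsupp e
  have hγk : M.mulVec γ = 0 := by
    rw [hγs, Matrix.mulVec_smul, hk, smul_zero]
  have hγ0 : γ ≠ 0 := by
    intro h
    exact ((hsupp e1).mpr he1) (congrFun h e1)
  refine ⟨γ, ⟨hγk, ?_, hγ0, ?_, ?_⟩, ?_, ?_⟩
  · intro e
    rcases eq_or_ne (y e) 0 with h | h
    · right; left; simp [hγ, h]
    · have habs : |γ e| = 1 := by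
        rw [hγ, abs_div, abs_abs, abs_eq_abs_of_minimal M hTU y hk hminli he1 h,
          div_self (ne_of_gt hc)]
      rcases abs_eq (le_of_lt one_pos) |>.mp habs with h' | h'
      · right; right; exact h'
      · left; exact h'
  · exact not_li_of_kernel M γ hγk hγ0
  · intro s hs
    exact hminli s (hsuppset ▸ hs)
  · intro e he
    have hy := (hsupp e).mp he
    have := hconf e hy
    rw [hγ]
    calc (0:ℝ) < (x e * y e) / |y e1| := div_pos this hc
    _ = x e * (y e / |y e1|) := by ring
  · intro e he
    by_contra hne
    have hy := (hsupp e).mp hne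
    have := hconf e hy
    rw [he, zero_mul] at this
    exact lt_irrefl 0 this

lemma exists_conformal_circuit (M : Matrix V E ℝ)
    (hTU : ∀ (k : ℕ) (f : Fin k → V) (g : Fin k → E),
      (M.submatrix f g).det = 1 ∨ (M.submatrix f g).det = 0 ∨ (M.submatrix f g).det = -1) :
    ∀ (N : ℕ) (x : E → ℝ), (suppF x).card ≤ N → M.mulVec x = 0 → x ≠ 0 →
      ∃ γ : E → ℝ, IsCircuit M γ ∧ (∀ e, γ e ≠ 0 → 0 < x e * γ e) ∧
        ∀ e, x e = 0 → γ e = 0 := by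
  classical
  intro N
  induction N with
  | zero =>
    intro x hcard hk hx
    exfalso
    apply hx
    funext e
    by_contra he
    have : e ∈ suppF x := mem_suppF.mpr he
    have := Finset.card_pos.mpr ⟨e, this⟩
    omega
  | succ N ih =>
    intro x hcard hk hx
    -- find a support-minimal nonzero kernel vector supported inside supp x
    have hQ : ∃ k, ∃ y : E → ℝ, M.mulVec y = 0 ∧ y ≠ 0 ∧ (∀ e, y e ≠ 0 → x e ≠ 0) ∧
        (suppF y).card ≤ k := ⟨(suppF x).card, x, hk, hx, fun _ h => h, le_refl _⟩
    obtain ⟨y, hyk, hy0, hysupp, hycard⟩ := Nat.find_spec hQ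
    have hmin : ∀ z : E → ℝ, M.mulVec z = 0 → z ≠ 0 → (∀ e, z e ≠ 0 → x e ≠ 0) →
        Nat.find hQ ≤ (suppF z).card := by
      intro z h1 h2 h3
      exact Nat.find_min' hQ ⟨z, h1, h2, h3, le_refl _⟩
    have hminli : ∀ s : Set E, s ⊂ {e : E | y e ≠ 0} →
        LinearIndependent ℝ (fun e : s => fun v => M v e.1) := by
      intro s hs
      by_contra hnot
      obtain ⟨z, hz1, hz2, hz3⟩ := kernel_vec_of_not_li M s hnot
      have hzy : ∀ e, z e ≠ 0 → y e ≠ 0 := fun e h => hs.1 (hz3 e h)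
      have hzx : ∀ e, z e ≠ 0 → x e ≠ 0 := fun e h => hysupp e (hzy e h)
      have h4 := hmin z hz1 hz2 hzx
      obtain ⟨e0, he0y, he0s⟩ := Set.exists_of_ssubset hs
      have hsub : suppF z ⊆ suppF y := fun e he => mem_suppF.mpr (hzy e (mem_suppF.mp he))
      have he0z : e0 ∉ suppF z := fun hc => he0s (hz3 e0 (mem_suppF.mp hc))
      have he0y' : e0 ∈ suppF y := mem_suppF.mpr he0y
      have hlt : (suppF z).card < (suppF y).card :=
        Finset.card_lt_card ⟨hsub, fun hc => he0z (hc he0y')⟩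
      omega
    -- case analysis on signs
    by_cases h1 : ∀ e, y e ≠ 0 → 0 < x e * y e
    · exact circuit_of_conformal_minimal M hTU x y hyk hy0 hminli h1
    · push_neg at h1
      obtain ⟨f0, hf0, hf0'⟩ := h1
      have hf0x : x f0 ≠ 0 := hysupp f0 hf0
      have hf0neg : x f0 * y f0 < 0 :=
        lt_of_le_of_ne hf0' (mul_ne_zero hf0x hf0)
      by_cases h2 : ∀ e, y e ≠ 0 → x e * y e < 0
      · -- use -y
        have hminli' : ∀ s : Set E, s ⊂ {e : E | (-y) e ≠ 0} →
            LinearIndependent ℝ (fun e : s => fun v => M v e.1) := by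
          intro s hs
          apply hminli
          have : {e : E | (-y) e ≠ 0} = {e : E | y e ≠ 0} := by
            ext e; simp
          rwa [this] at hs
        refine circuit_of_conformal_minimal M hTU x (-y) (by rw [Matrix.mulVec_neg, hyk, neg_zero])
          (by simpa using hy0) hminli' ?_
        intro e he
        have hye : y e ≠ 0 := by simpa using he
        have := h2 e hye
        simp only [Pi.neg_apply, mul_neg]
        linarith
      · push_neg at h2
        obtain ⟨e1, he1, he1'⟩ := h2
        have he1pos : 0 < x e1 * y e1 :=
          lt_of_le_of_ne he1' (Ne.symm (mul_ne_zero (hysupp e1 he1) he1))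
        -- positive part of the support
        set P : Finset E := Finset.univ.filter (fun e => y e ≠ 0 ∧ 0 < x e * y e) with hP
        have hPne : P.Nonempty := ⟨e1, by simp [hP, he1, he1pos]⟩
        set t : ℝ := P.inf' hPne (fun e => x e / y e) with ht
        have htpos : 0 < t := by
          rw [ht]
          refine (Finset.lt_inf'_iff hPne).mpr ?_
          intro e he
          simp only [hP, Finset.mem_filter, Finset.mem_univ, true_and] at he
          exact div_pos_iff.mpr (mul_pos_iff.mp he.2)
        obtain ⟨em, hem, htm⟩ := Finset.exists_mem_eq_inf' hPne (fun e => x e / y e)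
        simp only [hP, Finset.mem_filter, Finset.mem_univ, true_and] at hem
        have htle : ∀ e, y e ≠ 0 → 0 < x e * y e → t ≤ x e / y e := by
          intro e hye hpos
          exact Finset.inf'_le _ (by simp [hP, hye, hpos])
        set z : E → ℝ := x - t • y with hz
        have hzk : M.mulVec z = 0 := by
          rw [hz, Matrix.mulVec_sub, Matrix.mulVec_smul, hk, hyk, smul_zero, sub_zero]
        -- strong conformality of z w.r.t. x
        have hzconf : ∀ e, z e ≠ 0 → 0 < x e * z e := by
          intro e hze
          have hge : 0 ≤ x e * z e := by
            rcases eq_or_ne (y e) 0 with hye | hye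
            · have : z e = x e := by simp [hz, hye]
              rw [this]
              exact mul_self_nonneg _
            · rcases lt_trichotomy (x e * y e) 0 with hneg | hzero | hpos
              · have : x e * z e = x e * x e - t * (x e * y e) := by
                  simp [hz]; ring
                nlinarith [mul_self_nonneg (x e)]
              · exact absurd hzero (mul_ne_zero (hysupp e hye) hye)
              · have hle := htle e hye hpos
                have h5 : t * (x e * y e) ≤ (x e / y e) * (x e * y e) :=
                  mul_le_mul_of_nonneg_right hle (le_of_lt hpos)
                have h6 : (x e / y e) * (x e * y e) = x e * x e := by
                  field_simp
                have h7 : x e * z e = x e * x e - t * (x e * y e) := by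
                  simp [hz]; ring
                linarith
          rcases eq_or_ne (x e) 0 with hxe | hxe
          · exfalso
            have hye : y e = 0 := by
              by_contra hye
              exact (hysupp e hye) hxe
            apply hze
            simp [hz, hxe, hye]
          · exact lt_of_le_of_ne hge (Ne.symm (mul_ne_zero hxe hze))
        have hzx : ∀ e, z e ≠ 0 → x e ≠ 0 := by
          intro e hze hxe
          have := hzconf e hze
          rw [hxe, zero_mul] at this
          exact lt_irrefl 0 this
        have hz0 : z ≠ 0 := by
          intro hc
          have hzf0 : z f0 = 0 := by rw [hc]; rfl
          have : x f0 * z f0 = x f0 * x f0 - t * (x f0 * y f0) := by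
            simp [hz]; ring
          rw [hzf0, mul_zero] at this
          nlinarith [mul_self_pos.mpr hf0x]
        -- the support of z is strictly smaller than that of x
        have hzmem : z em = 0 := by
          have hyem : y em ≠ 0 := hem.1
          have : z em = y em * (x em / y em - t) := by
            field_simp [hz]
            simp only [hz, Pi.sub_apply, Pi.smul_apply, smul_eq_mul]
            ring
          rw [this, ← htm, sub_self, mul_zero]
        have hcard' : (suppF z).card < (suppF x).card := by
          apply Finset.card_lt_card
          constructor
          · intro e he
            exact mem_suppF.mpr (hzx e (mem_suppF.mp he))
          · intro hc
            have hxem : x em ≠ 0 := hysupp em hem.1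
            have := hc (mem_suppF.mpr hxem)
            exact (mem_suppF.mp this) hzmem
        obtain ⟨γ, hγcirc, hγconf, hγsupp⟩ := ih z (by omega) hzk hz0
        refine ⟨γ, hγcirc, ?_, ?_⟩
        · intro e hγe
          have hzpos := hγconf e hγe
          have hze : z e ≠ 0 := by
            intro hc
            rw [hc, zero_mul] at hzpos
            exact lt_irrefl 0 hzpos
          have hxz := hzconf e hze
          nlinarith [mul_pos hxz hzpos, mul_self_pos.mpr hze]
        · intro e hxe
          apply hγsupp
          have hye : y e = 0 := by
            by_contra hye
            exact (hysupp e hye) hxe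
          simp [hz, hxe, hye]

lemma span_aux (M : Matrix V E ℝ)
    (hTU : ∀ (k : ℕ) (f : Fin k → V) (g : Fin k → E),
      (M.submatrix f g).det = 1 ∨ (M.submatrix f g).det = 0 ∨ (M.submatrix f g).det = -1)
    (lam : E → ℝ) :
    ∀ (N : ℕ) (x : E → ℝ), (suppF x).card ≤ N → M.mulVec x = 0 →
      (∀ e, x e ≠ 0 → 0 < lam e * x e) →
      x ∈ Submodule.span ℝ {g : E → ℝ | IsCircuit M g ∧ (∀ e, 0 ≤ lam e * g e) ∧
        ∀ e, lam e = 0 → g e = 0} := by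
  classical
  intro N
  induction N with
  | zero =>
    intro x hcard hk hconf
    have : x = 0 := by
      funext e
      by_contra he
      have := Finset.card_pos.mpr ⟨e, mem_suppF.mpr he⟩
      omega
    rw [this]
    exact Submodule.zero_mem _
  | succ N ih =>
    intro x hcard hk hconf
    by_cases hx : x = 0
    · rw [hx]; exact Submodule.zero_mem _
    obtain ⟨γ, hγcirc, hγconf, hγsupp⟩ :=
      exists_conformal_circuit M hTU (suppF x).card x le_rfl hk hx
    obtain ⟨hγk, hγpm, hγ0, hdep, hminl⟩ := hγcirc
    -- γ is in the generating set
    have hγlam : ∀ e, γ e ≠ 0 → 0 < lam e * γ e := by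
      intro e hγe
      have h1 := hγconf e hγe
      have hxe : x e ≠ 0 := by
        intro hc; rw [hc, zero_mul] at h1; exact lt_irrefl 0 h1
      have h2 := hconf e hxe
      nlinarith [mul_pos h2 h1, mul_self_pos.mpr hxe]
    have hγG : γ ∈ {g : E → ℝ | IsCircuit M g ∧ (∀ e, 0 ≤ lam e * g e) ∧
        ∀ e, lam e = 0 → g e = 0} := by
      refine ⟨⟨hγk, hγpm, hγ0, hdep, hminl⟩, ?_, ?_⟩
      · intro e
        rcases eq_or_ne (γ e) 0 with h | h
        · rw [h, mul_zero]
        · exact le_of_lt (hγlam e h)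
      · intro e hlame
        by_contra h
        have := hγlam e h
        rw [hlame, zero_mul] at this
        exact lt_irrefl 0 this
    -- the minimum of x e * γ e over the support of γ
    have hγne : (suppF γ).Nonempty := by
      obtain ⟨e, he⟩ := Function.ne_iff.mp hγ0
      exact ⟨e, mem_suppF.mpr (by simpa using he)⟩
    set t : ℝ := (suppF γ).inf' hγne (fun e => x e * γ e) with ht
    have htpos : 0 < t := by
      refine (Finset.lt_inf'_iff hγne).mpr ?_
      intro e he
      exact hγconf e (mem_suppF.mp he)
    have htle : ∀ e, γ e ≠ 0 → t ≤ x e * γ e := by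
      intro e he
      exact Finset.inf'_le _ (mem_suppF.mpr he)
    obtain ⟨em, hem, htm⟩ := Finset.exists_mem_eq_inf' hγne (fun e => x e * γ e)
    have hγem : γ em ≠ 0 := mem_suppF.mp hem
    have hγ2 : ∀ e, γ e ≠ 0 → γ e * γ e = 1 := by
      intro e he
      rcases hγpm e with h | h | h
      · rw [h]; norm_num
      · exact absurd h he
      · rw [h]; norm_num
    set x' : E → ℝ := x - t • γ with hx'
    have hx'e : ∀ e, x' e = x e - t * γ e := fun e => rfl
    have hx'k : M.mulVec x' = 0 := by
      rw [hx', Matrix.mulVec_sub, Matrix.mulVec_smul, hk, hγk, smul_zero, sub_zero]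
    have hx'conf : ∀ e, x' e ≠ 0 → 0 < lam e * x' e := by
      intro e hx'ne
      rcases eq_or_ne (γ e) 0 with h | h
      · have : x' e = x e := by rw [hx'e, h, mul_zero, sub_zero]
        rw [this]
        exact hconf e (this ▸ hx'ne)
      · have hlamne : lam e ≠ 0 := by
          intro hc
          have := hγlam e h
          rw [hc, zero_mul] at this
          exact lt_irrefl 0 this
        have h_a : 0 < lam e * γ e := hγlam e h
        have h_b : 0 ≤ x e * γ e - t := by linarith [htle e h]
        have h9 : lam e * (x e - t * γ e) = (lam e * γ e) * (x e * γ e - t) := by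
          linear_combination (-(lam e * x e)) * (hγ2 e h)
        have hge : 0 ≤ lam e * x' e := by
          rw [hx'e, h9]
          exact mul_nonneg h_a.le h_b
        exact lt_of_le_of_ne hge (Ne.symm (mul_ne_zero hlamne hx'ne))
    have hx'em : x' em = 0 := by
      have h1 : γ em * x' em = x em * γ em - t := by
        rw [hx'e]
        linear_combination (-t) * (hγ2 em hγem)
      have h2 : x em * γ em = t := by rw [ht, htm]
      have : γ em * x' em = 0 := by rw [h1, h2, sub_self]
      rcases mul_eq_zero.mp this with h | h
      · exact absurd h hγem
      · exact h
    have hx'supp : ∀ e, x e = 0 → x' e = 0 := by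
      intro e he
      rw [hx'e, he, hγsupp e he, mul_zero, sub_zero]
    have hcard' : (suppF x').card < (suppF x).card := by
      apply Finset.card_lt_card
      constructor
      · intro e he
        rw [mem_suppF] at he ⊢
        intro hc
        exact he (hx'supp e hc)
      · intro hc
        have hxem : x em ≠ 0 := by
          intro h
          have := hγsupp em h
          exact hγem this
        have := hc (mem_suppF.mpr hxem)
        exact (mem_suppF.mp this) hx'em
    have hx'mem := ih x' (by omega) hx'k hx'conf
    have hxsum : x = x' + t • γ := by
      funext e
      simp only [Pi.add_apply, Pi.smul_apply, smul_eq_mul, hx'e]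
      ring
    rw [hxsum]
    exact Submodule.add_mem _ hx'mem (Submodule.smul_mem _ t (Submodule.subset_span hγG))

end Aux

/-- For M totally unimodular and a nonzero λ ∈ ker(M), the kernel of
the submatrix M_λ on the columns supp(λ) — identified with the subspace of kernel
vectors supported on supp(λ) — has a basis consisting of circuits, each consistent
with λ. -/
theorem stmt_11 {V E : Type*} [Fintype V] [Fintype E]
    (M : Matrix V E ℝ)
    (hTU : ∀ (k : ℕ) (f : Fin k → V) (g : Fin k → E),
      (M.submatrix f g).det = 1 ∨ (M.submatrix f g).det = 0 ∨ (M.submatrix f g).det = -1)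
    (lam : E → ℝ) (hlam : M.mulVec lam = 0) (hne : lam ≠ 0) :
    ∃ (n : ℕ) (γ : Fin n → (E → ℝ)),
      (∀ i, IsCircuit M (γ i) ∧ (∀ e, 0 ≤ lam e * γ i e) ∧
        ∀ e, lam e = 0 → γ i e = 0) ∧
      LinearIndependent ℝ γ ∧
      ∀ y : E → ℝ, M.mulVec y = 0 → (∀ e, lam e = 0 → y e = 0) →
        y ∈ Submodule.span ℝ (Set.range γ) := by
  classical
  have hlamspan : lam ∈ Submodule.span ℝ {g : E → ℝ | IsCircuit M g ∧
      (∀ e, 0 ≤ lam e * g e) ∧ ∀ e, lam e = 0 → g e = 0} :=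
    span_aux M hTU lam (suppF lam).card lam le_rfl hlam
      (fun e he => mul_self_pos.mpr he)
  have hK : ∀ y : E → ℝ, M.mulVec y = 0 → (∀ e, lam e = 0 → y e = 0) →
      y ∈ Submodule.span ℝ {g : E → ℝ | IsCircuit M g ∧
        (∀ e, 0 ≤ lam e * g e) ∧ ∀ e, lam e = 0 → g e = 0} := by
    intro y hyk hysupp
    have hSlam : (suppF lam).Nonempty := by
      obtain ⟨e, he⟩ := Function.ne_iff.mp hne
      exact ⟨e, mem_suppF.mpr (by simpa using he)⟩
    set ε : ℝ := (suppF lam).inf' hSlam (fun e => (lam e * lam e) / (1 + |lam e * y e|))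
      with hε
    have hεpos : 0 < ε := by
      refine (Finset.lt_inf'_iff hSlam).mpr ?_
      intro e he
      have h1 : 0 < lam e * lam e := mul_self_pos.mpr (mem_suppF.mp he)
      have h2 : (0:ℝ) < 1 + |lam e * y e| := by positivity
      exact div_pos h1 h2
    set x : E → ℝ := lam + ε • y with hx
    have hxk : M.mulVec x = 0 := by
      rw [hx, Matrix.mulVec_add, Matrix.mulVec_smul, hlam, hyk, smul_zero, add_zero]
    have hxconf : ∀ e, x e ≠ 0 → 0 < lam e * x e := by
      intro e hxe
      rcases eq_or_ne (lam e) 0 with h | h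
      · exfalso
        apply hxe
        simp [hx, h, hysupp e h]
      · have hle : ε ≤ (lam e * lam e) / (1 + |lam e * y e|) :=
          Finset.inf'_le _ (mem_suppF.mpr h)
        have hpos : (0:ℝ) < 1 + |lam e * y e| := by positivity
        have h3 : ε * (1 + |lam e * y e|) ≤ lam e * lam e := (le_div_iff₀ hpos).mp hle
        rw [mul_add, mul_one] at h3
        have h5 : -(ε * |lam e * y e|) ≤ ε * (lam e * y e) := by
          nlinarith [neg_abs_le (lam e * y e), hεpos.le]
        have h6 : lam e * x e = lam e * lam e + ε * (lam e * y e) := by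
          simp only [hx, Pi.add_apply, Pi.smul_apply, smul_eq_mul]
          ring
        rw [h6]
        linarith
    have hxmem := span_aux M hTU lam (suppF x).card x le_rfl hxk hxconf
    have hyx : y = ε⁻¹ • (x - lam) := by
      funext e
      simp only [hx, Pi.smul_apply, Pi.sub_apply, Pi.add_apply, smul_eq_mul]
      field_simp
      ring
    rw [hyx]
    exact Submodule.smul_mem _ _ (Submodule.sub_mem _ hxmem hlamspan)
  obtain ⟨b, hbsub, hbspan, hbind⟩ := exists_linearIndependent ℝ
    {g : E → ℝ | IsCircuit M g ∧ (∀ e, 0 ≤ lam e * g e) ∧ ∀ e, lam e = 0 → g e = 0}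
  have hbfin : b.Finite := hbind.setFinite
  haveI : Fintype b := hbfin.fintype
  refine ⟨Fintype.card b, fun i => ((Fintype.equivFin b).symm i : E → ℝ), ?_, ?_, ?_⟩
  · intro i
    exact hbsub ((Fintype.equivFin b).symm i).2
  · exact hbind.comp _ (Fintype.equivFin b).symm.injective
  · intro y hy1 hy2
    have hrange : Set.range (fun i => ((Fintype.equivFin b).symm i : E → ℝ)) = b := by
      rw [show (fun i => ((Fintype.equivFin b).symm i : E → ℝ))
          = Subtype.val ∘ (Fintype.equivFin b).symm from rfl,
        Set.range_comp, Equiv.range_eq_univ, Set.image_univ, Subtype.range_coe]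
    rw [hrange, hbspan]
    exact hK y hy1 hy2
end

section
/- Let G be a finite directed graph and let H' ⊊ H be subgraphs (edge subsets) of G, each equipped with a strongly connected orientation such that the orientation of H' is induced from that of H. Then genus(H') < genus(H), where genus denotes the dimension of the kernel of the signed incidence matrix restricted to the given edge set. -/
/-- The genus of an edge subset: the dimension of the kernel of the signed
incidence matrix restricted to the columns in that subset. -/
noncomputable def genus {V E : Type*} [Fintype V] [Fintype E] [DecidableEq V]
    [DecidableEq E] (src tgt : E → V) (H : Finset E) : ℕ :=
  Module.finrank ℝ (LinearMap.ker (Matrix.mulVecLin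
    ((signedInc src tgt).submatrix id (fun e : {e : E // e ∈ H} => e.1))))

section Aux

variable {V E : Type*} [Fintype V] [Fintype E] [DecidableEq V] [DecidableEq E]
  (src tgt : E → V)

/-- The incidence matrix restricted to a finset of edges. -/
noncomputable def MK (K : Finset E) : Matrix V {e : E // e ∈ K} ℝ :=
  (signedInc src tgt).submatrix id (fun e : {e : E // e ∈ K} => e.1)

/-- Extension by zero from functions on H' to functions on H. -/
def extMap (H' H : Finset E) : ({e : E // e ∈ H'} → ℝ) →ₗ[ℝ] ({e : E // e ∈ H} → ℝ) where
  toFun x := fun j => if h : j.1 ∈ H' then x ⟨j.1, h⟩ else 0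
  map_add' x y := by funext j; by_cases h : j.1 ∈ H' <;> simp [h]
  map_smul' c x := by funext j; by_cases h : j.1 ∈ H' <;> simp [h]

lemma extMap_inj (H' H : Finset E) (hsub : H' ⊆ H) :
    Function.Injective (extMap (E := E) H' H) := by
  intro x y hxy
  funext j
  have := congrFun hxy ⟨j.1, hsub j.2⟩
  simpa [extMap, j.2] using this

lemma mulVec_ext (H' H : Finset E) (hsub : H' ⊆ H) (x : {e : E // e ∈ H'} → ℝ) :
    (MK src tgt H).mulVecLin (extMap H' H x) = (MK src tgt H').mulVecLin x := by
  funext v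
  simp only [Matrix.mulVecLin_apply, Matrix.mulVec, dotProduct, MK,
    Matrix.submatrix_apply, id]
  set g : E → ℝ := fun e => signedInc src tgt v e * (if h : e ∈ H' then x ⟨e, h⟩ else 0)
    with hg
  have lhs : (∑ j : {e : E // e ∈ H}, signedInc src tgt v j.1 * extMap H' H x j)
      = ∑ e ∈ H, g e := by
    rw [← Finset.sum_coe_sort H g]
    refine Finset.sum_congr rfl (fun j _ => ?_)
    by_cases h : j.1 ∈ H' <;> simp [extMap, g, h]
  have rhs : (∑ j : {e : E // e ∈ H'}, signedInc src tgt v j.1 * x j)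
      = ∑ e ∈ H', g e := by
    rw [← Finset.sum_coe_sort H' g]
    refine Finset.sum_congr rfl (fun j _ => ?_)
    simp [g, j.2]
  rw [lhs, rhs]
  exact (Finset.sum_subset hsub (fun e _ he' => by simp [g, he'])).symm

lemma single_col (H : Finset E) (j : {e : E // e ∈ H}) :
    (MK src tgt H).mulVecLin (Pi.single j 1)
      = fun v => signedInc src tgt v j.1 := by
  funext v
  simp [MK, Matrix.mulVecLin_apply, Matrix.mulVec_single]

lemma path_flow (H : Finset E) {a b : V}
    (hab : Relation.ReflTransGen (fun x y : V => ∃ f ∈ H, src f = x ∧ tgt f = y) a b) :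
    ∃ y : {e : E // e ∈ H} → ℝ, (∀ j, 0 ≤ y j) ∧
      (MK src tgt H).mulVecLin y
        = fun v => (if b = v then (1 : ℝ) else 0) - (if a = v then 1 else 0) := by
  induction hab with
  | refl => exact ⟨0, fun j => le_rfl, by funext v; simp⟩
  | tail _ hstep ih =>
    obtain ⟨y, hy, hMy⟩ := ih
    obtain ⟨f, hf, hsrc, htgt⟩ := hstep
    subst hsrc htgt
    refine ⟨y + Pi.single ⟨f, hf⟩ 1, fun j => ?_, ?_⟩
    · have h0 := hy j
      simp only [Pi.add_apply, Pi.single_apply]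
      split <;> linarith
    · rw [map_add, hMy, single_col]
      funext v
      simp only [Pi.add_apply, signedInc]
      ring

end Aux

/-- If H' ⊊ H are edge subsets of a finite directed graph, each
strongly connected (every edge of the subset lies on a directed cycle within the
subset, the orientation of H' being the one induced from H), then
genus(H') < genus(H). -/
theorem stmt_12 {V E : Type*} [Fintype V] [Fintype E] [DecidableEq V] [DecidableEq E]
    (src tgt : E → V) (H' H : Finset E) (hss : H' ⊂ H)
    (hH : ∀ e ∈ H, Relation.ReflTransGen
      (fun x y : V => ∃ f ∈ H, src f = x ∧ tgt f = y) (tgt e) (src e))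
    (hH' : ∀ e ∈ H', Relation.ReflTransGen
      (fun x y : V => ∃ f ∈ H', src f = x ∧ tgt f = y) (tgt e) (src e)) :
    genus src tgt H' < genus src tgt H := by
  classical
  obtain ⟨e, heH, heH'⟩ := Finset.exists_of_ssubset hss
  set K : Submodule ℝ ({e : E // e ∈ H} → ℝ) :=
    LinearMap.ker ((MK src tgt H).mulVecLin) with hK
  set K' : Submodule ℝ ({e : E // e ∈ H} → ℝ) :=
    (LinearMap.ker ((MK src tgt H').mulVecLin)).map (extMap H' H) with hK'
  have hle : K' ≤ K := by
    rintro _ ⟨x, hx, rfl⟩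
    simp only [hK, LinearMap.mem_ker]
    rw [mulVec_ext src tgt H' H hss.subset]
    exact hx
  -- construct a kernel vector with nonzero coordinate at e
  obtain ⟨y, hy, hMy⟩ := path_flow src tgt H (hH e heH)
  set x : {e : E // e ∈ H} → ℝ := y + Pi.single ⟨e, heH⟩ 1 with hx
  have hxK : x ∈ K := by
    simp only [hK, LinearMap.mem_ker, hx]
    rw [map_add, hMy, single_col]
    funext v
    simp only [Pi.add_apply, signedInc, Pi.zero_apply]
    ring
  have hxe : x ⟨e, heH⟩ ≠ 0 := by
    have h1 : x ⟨e, heH⟩ = y ⟨e, heH⟩ + 1 := by simp [hx]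
    have := hy ⟨e, heH⟩
    rw [h1]
    linarith
  have hxK' : x ∉ K' := by
    rintro ⟨z, _, hz⟩
    apply hxe
    rw [← hz]
    simp [extMap, heH']
  have hlt : K' < K := lt_of_le_of_ne hle (fun h => hxK' (h ▸ hxK))
  have h1 : genus src tgt H' = Module.finrank ℝ K' := by
    rw [hK']
    have := (Submodule.equivMapOfInjective (extMap H' H)
      (extMap_inj H' H hss.subset)
      (LinearMap.ker ((MK src tgt H').mulVecLin))).finrank_eq
    rw [← this]
    rfl
  have h2 : genus src tgt H = Module.finrank ℝ K := rfl
  rw [h1, h2]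
  exact Submodule.finrank_lt_finrank_of_lt hlt
end

section
/- Let G be a finite directed graph with signed incidence matrix M, and let H be a cut subgraph of G with coherent acyclic orientation induced by G; that is, there is an ordered partition V(G) = V_1 ⊔ ⋯ ⊔ V_s such that the edges of H are exactly the edges between distinct parts, each oriented from the smaller-indexed part to the larger. Then for every edge e ∈ H there exists z_e ∈ (ℤ_{≥0})^{E(H)} (supported on edges of H) such that e + z_e ∈ Row(M) ∩ ℤ^E. -/
/-- Let H be a cut subgraph of G with coherent acyclic orientation:
there is an ordered partition of the vertices (recorded by p : V → ℕ) such that H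
consists exactly of the edges between distinct parts, each oriented from the
smaller-indexed part to the larger. Then for every e ∈ H there is a nonnegative
integer vector z_e supported on H with e + z_e ∈ Row(M) ∩ ℤ^E, the lattice of
integer cuts. -/
theorem stmt_16 {V E : Type*} [Fintype V] [Fintype E] [DecidableEq V] [DecidableEq E]
    (src tgt : E → V) (H : Set E) (p : V → ℕ)
    (hcut : ∀ e : E, e ∈ H ↔ p (src e) ≠ p (tgt e))
    (hco : ∀ e ∈ H, p (src e) < p (tgt e)) :
    ∀ e ∈ H, ∃ z : E → ℤ, (∀ f, 0 ≤ z f) ∧ (∀ f, f ∉ H → z f = 0) ∧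
      ∃ y : V → ℝ, Matrix.vecMul y (signedInc src tgt) =
        fun f => (if f = e then (1 : ℝ) else 0) + (z f : ℝ) := by
  intro e he
  refine ⟨fun f => if f ≠ e ∧ p (src f) ≤ p (src e) ∧ p (src e) < p (tgt f) then 1 else 0,
    ?_, ?_, ?_⟩
  · intro f; dsimp only; split <;> norm_num
  · intro f hf
    have hpf : p (src f) = p (tgt f) := by
      by_contra h; exact hf ((hcut f).mpr h)
    simp only [ite_eq_right_iff]
    rintro ⟨hne, h1, h2⟩
    omega
  · refine ⟨fun v => if p (src e) < p v then 1 else 0, ?_⟩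
    funext f
    have key : Matrix.vecMul (fun v => if p (src e) < p v then (1:ℝ) else 0)
        (signedInc src tgt) f
        = (if p (src e) < p (tgt f) then (1:ℝ) else 0)
          - (if p (src e) < p (src f) then (1:ℝ) else 0) := by
      simp only [Matrix.vecMul, dotProduct, signedInc, mul_sub, mul_ite, mul_one,
        mul_zero, Finset.sum_sub_distrib]
      rw [Finset.sum_ite_eq Finset.univ (tgt f), Finset.sum_ite_eq Finset.univ (src f)]
      simp
    rw [key]
    by_cases hfe : f = e
    · subst hfe
      have h1 := hco f he
      simp only [if_pos rfl, if_pos h1, if_neg (lt_irrefl _)]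
      norm_num
    · simp only [if_neg hfe]
      by_cases hfH : f ∈ H
      · have h1 := hco f hfH
        by_cases h2 : p (src e) < p (src f)
        · rw [if_pos h2, if_pos (h2.trans h1), if_neg (by omega)]
          norm_num
        · rw [if_neg h2]
          by_cases h3 : p (src e) < p (tgt f)
          · rw [if_pos h3, if_pos ⟨hfe, by omega, h3⟩]; norm_num
          · rw [if_neg h3, if_neg (by push_neg; intro _ _; omega)]; norm_num
      · have hpf : p (src f) = p (tgt f) := by
          by_contra h; exact hfH ((hcut f).mpr h)
        rw [hpf]
        have hn : ¬(f ≠ e ∧ p (tgt f) ≤ p (src e) ∧ p (src e) < p (tgt f)) := by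
          rintro ⟨-, h1, h2⟩; omega
        rw [if_neg hn]
        norm_num
end

section
/- Let G be a finite directed graph with signed incidence matrix M whose row indexed by vertex w is r_w. Suppose c = Σ_w a_w r_w with integer coefficients a_w, and suppose c = e + z where e is the standard basis vector of an edge e = (u,v) and z ∈ (ℤ_{≥0})^E is supported on a fixed edge set N containing e. Then: (1) for any non-loop edge f = (u',v') not in N, a_{u'} = a_{v'}; and (2) a_u < a_v. -/
lemma signedInc_sum {V E : Type*} [Fintype V] [DecidableEq V] (src tgt : E → V)
    (a : V → ℤ) (f : E) :
    (∑ w, (a w : ℝ) * signedInc src tgt w f) = (a (tgt f) : ℝ) - (a (src f) : ℝ) := by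
  simp [signedInc, mul_sub, Finset.sum_sub_distrib, mul_ite, Finset.sum_ite_eq']

/-- Suppose c = Σ_w a_w r_w with integer coefficients a_w, and
c = e₀ + z with z a nonnegative integer vector supported on a set N containing e₀.
Then (1) for every non-loop edge f ∉ N the potentials at its endpoints agree,
a(src f) = a(tgt f); and (2) a(src e₀) < a(tgt e₀). -/
theorem stmt_17 {V E : Type*} [Fintype V] [Fintype E] [DecidableEq V] [DecidableEq E]
    (src tgt : E → V) (a : V → ℤ) (e₀ : E) (z : E → ℤ) (N : Set E)
    (hz : ∀ f, 0 ≤ z f) (hzsupp : ∀ f, f ∉ N → z f = 0) (he₀ : e₀ ∈ N)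
    (hc : ∀ f : E, (∑ w, (a w : ℝ) * signedInc src tgt w f) =
      (if f = e₀ then (1 : ℝ) else 0) + (z f : ℝ)) :
    (∀ f : E, f ∉ N → src f ≠ tgt f → a (src f) = a (tgt f)) ∧
      a (src e₀) < a (tgt e₀) := by
  constructor
  · intro f hf _
    have h := hc f
    rw [signedInc_sum] at h
    have hne : f ≠ e₀ := fun h' => hf (h' ▸ he₀)
    rw [if_neg hne, hzsupp f hf] at h
    have : (a (tgt f) : ℝ) = (a (src f) : ℝ) := by push_cast at h ⊢; linarith
    exact_mod_cast this.symm
  · have h := hc e₀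
    rw [signedInc_sum, if_pos rfl] at h
    have hz0 := hz e₀
    have : (a (src e₀) : ℝ) < (a (tgt e₀) : ℝ) := by
      have : (0:ℝ) ≤ (z e₀ : ℝ) := by exact_mod_cast hz0
      linarith
    exact_mod_cast this
end

section
/- Let G be a finite directed graph with signed incidence matrix M, and let H ⊆ E(G) be an edge set such that for every e ∈ H there exists z_e ∈ (ℤ_{≥0})^H with e + z_e ∈ Row(M) ∩ ℤ^E. Then H is a cut subgraph of G with coherent acyclic orientation: there is an ordered partition V(G) = V_1 ⊔ ⋯ ⊔ V_s such that H consists exactly of the edges between distinct parts, and every edge of H is directed from a smaller-indexed part to a larger-indexed part. -/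
/-- If every edge e of an edge set H admits a nonnegative integer
vector z_e supported on H with e + z_e ∈ Row(M) ∩ ℤ^E (the lattice of integer
cuts), then H is a cut subgraph with coherent acyclic orientation: there is an
ordered partition of the vertices (recorded by p : V → ℕ) such that H consists
exactly of the edges between distinct parts, every edge of H being directed from a
smaller-indexed part to a larger-indexed one. -/
theorem stmt_18 {V E : Type*} [Fintype V] [Fintype E] [DecidableEq V] [DecidableEq E]
    (src tgt : E → V) (H : Set E)
    (hcut : ∀ e ∈ H, ∃ z : E → ℤ, (∀ f, 0 ≤ z f) ∧ (∀ f, f ∉ H → z f = 0) ∧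
      ∃ y : V → ℝ, Matrix.vecMul y (signedInc src tgt) =
        fun f => (if f = e then (1 : ℝ) else 0) + (z f : ℝ)) :
    ∃ p : V → ℕ, (∀ e : E, e ∈ H ↔ p (src e) ≠ p (tgt e)) ∧
      ∀ e ∈ H, p (src e) < p (tgt e) := by
  classical
  have key : ∀ e, e ∈ H → ∃ y : V → ℝ,
      (∀ f, f ∉ H → y (tgt f) = y (src f)) ∧
      (∀ f, y (src f) ≤ y (tgt f)) ∧
      (1 ≤ y (tgt e) - y (src e)) := by
    intro e he
    obtain ⟨z, hz0, hzH, y, hy⟩ := hcut e he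
    have hd : ∀ f, y (tgt f) - y (src f) = (if f = e then (1:ℝ) else 0) + (z f : ℝ) := by
      intro f
      have h1 := congrFun hy f
      have h2 : Matrix.vecMul y (signedInc src tgt) f = y (tgt f) - y (src f) := by
        simp [Matrix.vecMul, dotProduct, signedInc, mul_sub,
          Finset.sum_sub_distrib, mul_ite, mul_one, mul_zero]
      rw [← h2, h1]
    refine ⟨y, ?_, ?_, ?_⟩
    · intro f hf
      have hne : f ≠ e := by rintro rfl; exact hf he
      have := hd f
      rw [if_neg hne, hzH f hf] at this
      push_cast at this
      linarith
    · intro f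
      have hdf := hd f
      have hz : (0:ℝ) ≤ z f := by exact_mod_cast hz0 f
      have hif : (0:ℝ) ≤ (if f = e then (1:ℝ) else 0) := by split_ifs <;> norm_num
      linarith
    · have hde := hd e
      rw [if_pos rfl] at hde
      have hz : (0:ℝ) ≤ z e := by exact_mod_cast hz0 e
      linarith
  set S : Finset E := Finset.univ.filter (fun e => e ∈ H) with hS
  set Y : E → V → ℝ := fun e => if h : e ∈ H then (key e h).choose else 0 with hY
  set q : V → ℝ := fun v => ∑ e ∈ S, Y e v with hq
  have hmemS : ∀ e, e ∈ S ↔ e ∈ H := by intro e; simp [hS]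
  have hq1 : ∀ f, f ∉ H → q (tgt f) = q (src f) := by
    intro f hf
    refine Finset.sum_congr rfl ?_
    intro e heS
    have he : e ∈ H := (hmemS e).1 heS
    simp only [hY, dif_pos he]
    exact (key e he).choose_spec.1 f hf
  have hq2 : ∀ f, f ∈ H → q (src f) < q (tgt f) := by
    intro f hf
    have hsub : q (tgt f) - q (src f) = ∑ e ∈ S, (Y e (tgt f) - Y e (src f)) := by
      simp [hq, Finset.sum_sub_distrib]
    have pos : (0:ℝ) < ∑ e ∈ S, (Y e (tgt f) - Y e (src f)) := by
      refine Finset.sum_pos' ?_ ⟨f, (hmemS f).2 hf, ?_⟩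
      · intro e heS
        have he : e ∈ H := (hmemS e).1 heS
        simp only [hY, dif_pos he]
        have := (key e he).choose_spec.2.1 f
        linarith
      · simp only [hY, dif_pos hf]
        have := (key f hf).choose_spec.2.2
        linarith
    linarith [hsub ▸ pos]
  set p : V → ℕ := fun v => (Finset.univ.filter (fun w => q w < q v)).card with hp
  have hmono : ∀ a b : V, q a < q b → p a < p b := by
    intro a b hab
    apply Finset.card_lt_card
    constructor
    · intro w hw
      simp only [Finset.mem_filter, Finset.mem_univ, true_and] at hw ⊢
      exact lt_trans hw hab
    · intro hsub
      have : a ∈ Finset.univ.filter (fun w => q w < q b) := by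
        simp [hab]
      have := hsub this
      simp at this
  have heq : ∀ a b : V, q a = q b → p a = p b := by
    intro a b hab
    simp only [hp, hab]
  refine ⟨p, ?_, fun e he => hmono _ _ (hq2 e he)⟩
  intro e
  constructor
  · intro he
    exact Nat.ne_of_lt (hmono _ _ (hq2 e he))
  · intro hne
    by_contra hnot
    exact hne (heq _ _ (hq1 e hnot).symm)
end
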